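/- arXiv:1512.05269 — 8 statements merged into one kernel-verified Lean document; each statement's English description precedes it below -/
import Mathlib

section
/- Let z, L, x, y ∈ ℂ and set X := e^{izL}. Assume X ≠ 1 and X ≠ 3 (in particular sin(zL/2) ≠ 0). Then −e^{iz(x+y)}/((X−1)(X−3)) + X²·e^{iz(x−y)}/((X−1)(X−3)) + X(2−X)·e^{iz(y−x)}/((X−1)(X−3)) + X²(2X−3)·e^{−iz(x+y)}/((X−1)(X−3)) = ((X+1)/(X−3))·e^{iz(x−y)} + (2X(X−1)/(X−3))·e^{−iz(x+y)} − 2i·((X−1)/(X−3))·sin(zy)·e^{−izx} + (1 + 2/(X−3))·sin(zx)·sin(zy) + i·(cos(zL/2)/sin(zL/2))·sin(zx)·sin(zy). -/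
set_option maxHeartbeats 1000000

open Complex

theorem stmt_8 (z L x y : ℂ) (X : ℂ) (hX : X = Complex.exp (I * z * L))
    (hX1 : X ≠ 1) (hX3 : X ≠ 3) :
    -Complex.exp (I * z * (x + y)) / ((X - 1) * (X - 3))
      + X ^ 2 * Complex.exp (I * z * (x - y)) / ((X - 1) * (X - 3))
      + X * (2 - X) * Complex.exp (I * z * (y - x)) / ((X - 1) * (X - 3))
      + X ^ 2 * (2 * X - 3) * Complex.exp (-(I * z * (x + y))) / ((X - 1) * (X - 3))
    = (X + 1) / (X - 3) * Complex.exp (I * z * (x - y))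
      + 2 * X * (X - 1) / (X - 3) * Complex.exp (-(I * z * (x + y)))
      - 2 * I * ((X - 1) / (X - 3)) * Complex.sin (z * y) * Complex.exp (-(I * z * x))
      + (1 + 2 / (X - 3)) * Complex.sin (z * x) * Complex.sin (z * y)
      + I * (Complex.cos (z * L / 2) / Complex.sin (z * L / 2))
          * Complex.sin (z * x) * Complex.sin (z * y) := by
  set a := Complex.exp (I * z * x) with ha
  set b := Complex.exp (I * z * y) with hb
  set E := Complex.exp (I * z * L / 2) with hE
  have ha0 : a ≠ 0 := Complex.exp_ne_zero _
  have hb0 : b ≠ 0 := Complex.exp_ne_zero _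
  have hE0 : E ≠ 0 := Complex.exp_ne_zero _
  have hXE : X = E ^ 2 := by
    rw [hX, hE, ← Complex.exp_nat_mul]; ring_nf
  have e1 : Complex.exp (I * z * (x + y)) = a * b := by
    rw [ha, hb, ← Complex.exp_add]; ring_nf
  have e2 : Complex.exp (I * z * (x - y)) = a * b⁻¹ := by
    rw [ha, hb, ← Complex.exp_neg, ← Complex.exp_add]; ring_nf
  have e3 : Complex.exp (I * z * (y - x)) = a⁻¹ * b := by
    rw [ha, hb, ← Complex.exp_neg, ← Complex.exp_add]; ring_nf
  have e4 : Complex.exp (-(I * z * (x + y))) = a⁻¹ * b⁻¹ := by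
    rw [ha, hb, ← Complex.exp_neg, ← Complex.exp_neg, ← Complex.exp_add]; ring_nf
  have e5 : Complex.exp (-(I * z * x)) = a⁻¹ := by
    rw [ha, ← Complex.exp_neg]
  have sx : Complex.sin (z * x) = (a⁻¹ - a) * I / 2 := by
    rw [Complex.sin, ha, ← Complex.exp_neg]; ring_nf
  have sy : Complex.sin (z * y) = (b⁻¹ - b) * I / 2 := by
    rw [Complex.sin, hb, ← Complex.exp_neg]; ring_nf
  have sL : Complex.sin (z * L / 2) = (E⁻¹ - E) * I / 2 := by
    rw [Complex.sin, hE, ← Complex.exp_neg]; ring_nf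
  have cL : Complex.cos (z * L / 2) = (E + E⁻¹) / 2 := by
    rw [Complex.cos, hE, ← Complex.exp_neg]; ring_nf
  have h1 : (E : ℂ) ^ 2 - 1 ≠ 0 := by
    rw [← hXE]; exact sub_ne_zero.mpr hX1
  have h3 : (E : ℂ) ^ 2 - 3 ≠ 0 := by
    rw [← hXE]; exact sub_ne_zero.mpr hX3
  have hden : (E⁻¹ - E) * I / 2 ≠ 0 := by
    intro h
    apply h1
    rw [mul_div_assoc] at h
    have hsub : E⁻¹ - E = 0 :=
      (mul_eq_zero.mp h).resolve_right (by norm_num [I_ne_zero])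
    have hEe : E⁻¹ = E := sub_eq_zero.mp hsub
    field_simp at hEe
    linear_combination -hEe
  have hsL : Complex.sin (z * L / 2) ≠ 0 := by rw [sL]; exact hden
  have hcot : Complex.cos (z * L / 2) / Complex.sin (z * L / 2)
      = I * ((E ^ 2 + 1) / (E ^ 2 - 1)) := by
    rw [cL, sL, div_eq_iff hden]
    field_simp
    ring_nf
    simp only [Complex.I_sq]
    ring
  -- coefficient identities
  have hab : (-1 : ℂ) / ((E ^ 2 - 1) * (E ^ 2 - 3))
      = (1 + 2 / (E ^ 2 - 3)) * (I * I / 4)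
        + (I * I) * ((E ^ 2 + 1) / (E ^ 2 - 1)) * (I * I / 4) := by
    simp only [Complex.I_mul_I]
    field_simp [Complex.I_mul_I]
    ring
  have haB : ((E : ℂ) ^ 2) ^ 2 / ((E ^ 2 - 1) * (E ^ 2 - 3))
      = (E ^ 2 + 1) / (E ^ 2 - 3)
        - (1 + 2 / (E ^ 2 - 3)) * (I * I / 4)
        - (I * I) * ((E ^ 2 + 1) / (E ^ 2 - 1)) * (I * I / 4) := by
    simp only [Complex.I_mul_I]
    field_simp [Complex.I_mul_I]
    ring
  have hAb : (E : ℂ) ^ 2 * (2 - E ^ 2) / ((E ^ 2 - 1) * (E ^ 2 - 3))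
      = I * I * ((E ^ 2 - 1) / (E ^ 2 - 3))
        - (1 + 2 / (E ^ 2 - 3)) * (I * I / 4)
        - (I * I) * ((E ^ 2 + 1) / (E ^ 2 - 1)) * (I * I / 4) := by
    simp only [Complex.I_mul_I]
    field_simp [Complex.I_mul_I]
    ring
  have hAB : ((E : ℂ) ^ 2) ^ 2 * (2 * E ^ 2 - 3) / ((E ^ 2 - 1) * (E ^ 2 - 3))
      = 2 * E ^ 2 * (E ^ 2 - 1) / (E ^ 2 - 3)
        - I * I * ((E ^ 2 - 1) / (E ^ 2 - 3))
        + (1 + 2 / (E ^ 2 - 3)) * (I * I / 4)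
        + (I * I) * ((E ^ 2 + 1) / (E ^ 2 - 1)) * (I * I / 4) := by
    simp only [Complex.I_mul_I]
    field_simp [Complex.I_mul_I]
    ring
  rw [e1, e2, e3, e4, e5, sx, sy, hcot, hXE]
  linear_combination (a * b) * hab + (a * b⁻¹) * haB + (a⁻¹ * b) * hAb
    + (a⁻¹ * b⁻¹) * hAB
end

section
/- Let a < b be real numbers, λ > 0 and M > 0. Let Φ : ℝ → ℝ be twice continuously differentiable on [a, b] with |Φ''(x)| ≥ M for all x ∈ [a, b], and let Ψ : ℝ → ℂ be continuously differentiable on [a, b]. Then ‖∫_a^b e^{iλΦ(x)}·Ψ(x) dx‖ ≤ (8/√(λM))·(‖Ψ(b)‖ + ∫_a^b ‖Ψ'(x)‖ dx). -/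
open MeasureTheory Complex Set intervalIntegral

private lemma hdwa_ofReal {f : ℝ → ℝ} {u x : ℝ} {s : Set ℝ} (hf : HasDerivWithinAt f u s x) :
    HasDerivWithinAt (fun y : ℝ => (f y : ℂ)) (u : ℂ) s x := by
  simpa using! Complex.ofRealCLM.hasFDerivAt.comp_hasDerivWithinAt x hf

private lemma norm_exp_Ilam (lam t : ℝ) : ‖Complex.exp (I * lam * t)‖ = 1 := by
  simp [Complex.norm_exp]

private lemma lemA (c d : ℝ) (hcd : c ≤ d) (lam δ : ℝ) (hlam : 0 < lam) (hδ : 0 < δ)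
    (φ f g : ℝ → ℝ)
    (hf : ∀ x ∈ Icc c d, HasDerivWithinAt φ (f x) (Icc c d) x)
    (hg : ∀ x ∈ Icc c d, HasDerivWithinAt f (g x) (Icc c d) x)
    (hgc : ContinuousOn g (Icc c d))
    (hfδ : ∀ x ∈ Icc c d, δ ≤ f x)
    (hsign : (∀ x ∈ Icc c d, 0 ≤ g x) ∨ (∀ x ∈ Icc c d, g x ≤ 0)) :
    ‖∫ x in c..d, Complex.exp (I * lam * φ x)‖ ≤ 3 / (lam * δ) := by
  have hIcc : uIcc c d = Icc c d := uIcc_of_le hcd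
  have hφc : ContinuousOn φ (Icc c d) := fun x hx => (hf x hx).continuousWithinAt
  have hfc : ContinuousOn f (Icc c d) := fun x hx => (hg x hx).continuousWithinAt
  set E : ℝ → ℂ := fun x => Complex.exp (I * lam * φ x) with hE
  have hEc : ContinuousOn E (Icc c d) :=
    Complex.continuous_exp.comp_continuousOn
      (continuousOn_const.mul (Complex.continuous_ofReal.comp_continuousOn hφc))
  have hfpos : ∀ x ∈ Icc c d, 0 < f x := fun x hx => lt_of_lt_of_le hδ (hfδ x hx)
  have hden : ∀ x ∈ Icc c d, (I * lam * f x : ℂ) ≠ 0 := by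
    intro x hx
    exact mul_ne_zero (mul_ne_zero Complex.I_ne_zero (by exact_mod_cast hlam.ne'))
      (by exact_mod_cast (hfpos x hx).ne')
  have hE' : ∀ x ∈ Icc c d, HasDerivWithinAt E (E x * (I * lam * f x)) (Icc c d) x := by
    intro x hx
    have h2 : HasDerivWithinAt (fun y => I * lam * (φ y : ℂ)) (I * lam * f x) (Icc c d) x :=
      (hdwa_ofReal (hf x hx)).const_mul _
    simpa [hE] using h2.cexp
  have hden' : ∀ x ∈ Icc c d,
      HasDerivWithinAt (fun y => (I * lam * f y : ℂ)) (I * lam * g x) (Icc c d) x := by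
    intro x hx
    exact (hdwa_ofReal (hg x hx)).const_mul _
  set G : ℝ → ℂ := fun x => E x / (I * lam * f x) with hGdef
  set G' : ℝ → ℂ := fun x => E x - E x * g x / (I * lam * (f x) ^ 2) with hG'def
  have hG : ∀ x ∈ Icc c d, HasDerivWithinAt G (G' x) (Icc c d) x := by
    intro x hx
    have h := (hE' x hx).div (hden' x hx) (hden x hx)
    convert h using 1
    · rfl
    · rfl
    have hfx : (f x : ℂ) ≠ 0 := by exact_mod_cast (hfpos x hx).ne'
    have hlamC : (lam : ℂ) ≠ 0 := by exact_mod_cast hlam.ne'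
    rw [hG'def]
    field_simp
  have hdenc : ContinuousOn (fun x => (I * lam * f x : ℂ)) (Icc c d) :=
    continuousOn_const.mul (Complex.continuous_ofReal.comp_continuousOn hfc)
  have hGc : ContinuousOn G (Icc c d) := hEc.div hdenc hden
  have hsecond_c : ContinuousOn (fun x => E x * g x / (I * lam * (f x) ^ 2)) (Icc c d) := by
    apply (hEc.mul (Complex.continuous_ofReal.comp_continuousOn hgc)).div
    · exact continuousOn_const.mul ((Complex.continuous_ofReal.comp_continuousOn hfc).pow 2)
    · intro x hx
      have hfx : (f x : ℂ) ≠ 0 := by exact_mod_cast (hfpos x hx).ne'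
      exact mul_ne_zero (mul_ne_zero Complex.I_ne_zero (by exact_mod_cast hlam.ne'))
        (pow_ne_zero 2 hfx)
  have hG'c : ContinuousOn G' (Icc c d) := hEc.sub hsecond_c
  have hint2 : IntervalIntegrable (fun x => E x * g x / (I * lam * (f x) ^ 2)) volume c d :=
    (hsecond_c.mono (le_of_eq hIcc)).intervalIntegrable
  have hintE : IntervalIntegrable E volume c d := (hEc.mono (le_of_eq hIcc)).intervalIntegrable
  have key : ∫ x in c..d, G' x = G d - G c := by
    apply integral_eq_sub_of_hasDeriv_right_of_le hcd hGc
    · intro x hx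
      exact ((hG x ⟨hx.1.le, hx.2.le⟩).hasDerivAt (Icc_mem_nhds hx.1 hx.2)).hasDerivWithinAt
    · exact (hG'c.mono (le_of_eq hIcc)).intervalIntegrable
  have split : ∫ x in c..d, E x
      = (G d - G c) + ∫ x in c..d, E x * g x / (I * lam * (f x) ^ 2) := by
    rw [← key, hG'def]
    rw [intervalIntegral.integral_sub hintE hint2]
    ring
  -- norm of G
  have hGnorm : ∀ x ∈ Icc c d, ‖G x‖ ≤ 1 / (lam * δ) := by
    intro x hx
    have h1 : ‖E x‖ = 1 := norm_exp_Ilam lam (φ x)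
    have h2 : ‖(I * lam * f x : ℂ)‖ = lam * f x := by
      simp [map_mul,
        abs_of_pos hlam, abs_of_pos (hfpos x hx)]
    rw [hGdef]
    simp only [norm_div, h1, h2]
    apply one_div_le_one_div_of_le (mul_pos hlam hδ)
    exact mul_le_mul_of_nonneg_left (hfδ x hx) hlam.le
  have hne2 : ∀ x ∈ Icc c d, (f x) ^ 2 ≠ 0 := fun x hx => pow_ne_zero 2 (hfpos x hx).ne'
  have hquotc : ContinuousOn (fun x => g x / (f x) ^ 2) (Icc c d) :=
    hgc.div (hfc.pow 2) hne2
  have hFTC2 : ∫ x in c..d, g x / (f x) ^ 2 = (-(f d)⁻¹) - (-(f c)⁻¹) := by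
    apply integral_eq_sub_of_hasDeriv_right_of_le hcd
      ((hfc.inv₀ (fun x hx => (hfpos x hx).ne')).neg)
    · intro x hx
      have h := ((hg x ⟨hx.1.le, hx.2.le⟩).inv (hfpos x ⟨hx.1.le, hx.2.le⟩).ne').neg
      have h' : HasDerivWithinAt (fun y => -(f y)⁻¹) (g x / f x ^ 2) (Icc c d) x := by
        simpa [neg_div] using! h
      exact (h'.hasDerivAt (Icc_mem_nhds hx.1 hx.2)).hasDerivWithinAt
    · exact (hquotc.mono (le_of_eq hIcc)).intervalIntegrable
  have hptnorm : ∀ x ∈ Icc c d, ‖E x * g x / (I * lam * (f x) ^ 2)‖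
      = |g x| / (lam * f x ^ 2) := by
    intro x hx
    rw [norm_div, norm_mul, norm_exp_Ilam, one_mul]
    congr 1
    · simp
    · simp [map_mul, map_pow,
        abs_of_pos hlam, abs_of_pos (hfpos x hx), sq_abs]
  have hfcinv : (f c)⁻¹ ≤ δ⁻¹ := by
    have hc : c ∈ Icc c d := left_mem_Icc.2 hcd
    exact (one_div δ) ▸ (one_div (f c)) ▸ one_div_le_one_div_of_le hδ (hfδ c hc)
  have hfdinv : (f d)⁻¹ ≤ δ⁻¹ := by
    have hd : d ∈ Icc c d := right_mem_Icc.2 hcd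
    exact (one_div δ) ▸ (one_div (f d)) ▸ one_div_le_one_div_of_le hδ (hfδ d hd)
  have hfcinvpos : 0 < (f c)⁻¹ := inv_pos.2 (hfpos c (left_mem_Icc.2 hcd))
  have hfdinvpos : 0 < (f d)⁻¹ := inv_pos.2 (hfpos d (right_mem_Icc.2 hcd))
  have hintnorm : IntervalIntegrable (fun x => ‖E x * g x / (I * lam * (f x) ^ 2)‖) volume c d :=
    (hsecond_c.norm.mono (le_of_eq hIcc)).intervalIntegrable
  have h2b : ‖∫ x in c..d, E x * g x / (I * lam * (f x) ^ 2)‖ ≤ 1 / (lam * δ) := by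
    refine le_trans (norm_integral_le_integral_norm hcd) ?_
    rcases hsign with hs | hs
    · have hmono : (∫ x in c..d, ‖E x * g x / (I * lam * (f x) ^ 2)‖)
          ≤ ∫ x in c..d, lam⁻¹ * (g x / f x ^ 2) := by
        apply intervalIntegral.integral_mono_on hcd hintnorm
          ((continuousOn_const.mul hquotc).mono (le_of_eq hIcc)).intervalIntegrable
        intro x hx
        rw [hptnorm x hx, _root_.abs_of_nonneg (hs x hx)]
        have : f x ≠ 0 := (hfpos x hx).ne'
        simp only [Pi.mul_apply, Pi.neg_apply]
        field_simp
        exact le_rfl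
      refine hmono.trans ?_
      rw [intervalIntegral.integral_const_mul, hFTC2]
      have : -(f d)⁻¹ - -(f c)⁻¹ ≤ δ⁻¹ := by linarith
      calc lam⁻¹ * (-(f d)⁻¹ - -(f c)⁻¹) ≤ lam⁻¹ * δ⁻¹ :=
            mul_le_mul_of_nonneg_left this (inv_pos.2 hlam).le
        _ = 1 / (lam * δ) := by rw [one_div, mul_inv]
    · have hmono : (∫ x in c..d, ‖E x * g x / (I * lam * (f x) ^ 2)‖)
          ≤ ∫ x in c..d, lam⁻¹ * (-(g x / f x ^ 2)) := by
        apply intervalIntegral.integral_mono_on hcd hintnorm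
          ((continuousOn_const.mul hquotc.neg).mono (le_of_eq hIcc)).intervalIntegrable
        intro x hx
        rw [hptnorm x hx, _root_.abs_of_nonpos (hs x hx)]
        have : f x ≠ 0 := (hfpos x hx).ne'
        simp only [Pi.mul_apply, Pi.neg_apply]
        field_simp
        exact le_rfl
      refine hmono.trans ?_
      rw [intervalIntegral.integral_const_mul, intervalIntegral.integral_neg, hFTC2]
      have : -(-(f d)⁻¹ - -(f c)⁻¹) ≤ δ⁻¹ := by linarith
      calc lam⁻¹ * -(-(f d)⁻¹ - -(f c)⁻¹) ≤ lam⁻¹ * δ⁻¹ :=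
            mul_le_mul_of_nonneg_left this (inv_pos.2 hlam).le
        _ = 1 / (lam * δ) := by rw [one_div, mul_inv]
  calc ‖∫ x in c..d, E x‖
      = ‖(G d - G c) + ∫ x in c..d, E x * g x / (I * lam * (f x) ^ 2)‖ := by rw [split]
    _ ≤ ‖G d - G c‖ + ‖∫ x in c..d, E x * g x / (I * lam * (f x) ^ 2)‖ := norm_add_le _ _
    _ ≤ (‖G d‖ + ‖G c‖) + 1 / (lam * δ) := add_le_add (norm_sub_le _ _) h2b
    _ ≤ (1 / (lam * δ) + 1 / (lam * δ)) + 1 / (lam * δ) :=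
        add_le_add (add_le_add (hGnorm d (right_mem_Icc.2 hcd)) (hGnorm c (left_mem_Icc.2 hcd)))
          le_rfl
    _ = 3 / (lam * δ) := by ring

private lemma lemA' (c d : ℝ) (hcd : c ≤ d) (lam δ : ℝ) (hlam : 0 < lam) (hδ : 0 < δ)
    (φ f g : ℝ → ℝ)
    (hf : ∀ x ∈ Icc c d, HasDerivWithinAt φ (f x) (Icc c d) x)
    (hg : ∀ x ∈ Icc c d, HasDerivWithinAt f (g x) (Icc c d) x)
    (hgc : ContinuousOn g (Icc c d))
    (hfδ : ∀ x ∈ Icc c d, f x ≤ -δ)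
    (hsign : (∀ x ∈ Icc c d, 0 ≤ g x) ∨ (∀ x ∈ Icc c d, g x ≤ 0)) :
    ‖∫ x in c..d, Complex.exp (I * lam * φ x)‖ ≤ 3 / (lam * δ) := by
  set φ2 : ℝ → ℝ := fun x => -φ x with hφ2
  have hconj : ∀ x : ℝ,
      Complex.exp (I * lam * φ x) = (starRingEnd ℂ) (Complex.exp (I * lam * φ2 x)) := by
    intro x
    rw [← Complex.exp_conj]
    congr 1
    rw [map_mul, map_mul, Complex.conj_I, Complex.conj_ofReal, Complex.conj_ofReal]
    rw [hφ2]
    push_cast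
    ring
  have hφc : ContinuousOn φ (Icc c d) := fun x hx => (hf x hx).continuousWithinAt
  have hφ2c : ContinuousOn φ2 (Icc c d) := hφc.neg
  have hEc' : ContinuousOn (fun x => Complex.exp (I * lam * φ2 x)) (Icc c d) :=
    Complex.continuous_exp.comp_continuousOn
      (continuousOn_const.mul (Complex.continuous_ofReal.comp_continuousOn hφ2c))
  have hint : IntervalIntegrable (fun x => Complex.exp (I * lam * φ2 x)) volume c d :=
    (hEc'.mono (le_of_eq (uIcc_of_le hcd))).intervalIntegrable
  have hrw : (∫ x in c..d, Complex.exp (I * lam * φ x))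
      = Complex.conjCLE.toContinuousLinearMap (∫ x in c..d, Complex.exp (I * lam * φ2 x)) := by
    rw [← ContinuousLinearMap.intervalIntegral_comp_comm _ hint]
    exact intervalIntegral.integral_congr (fun x _ => hconj x)
  rw [hrw]
  rw [show (Complex.conjCLE.toContinuousLinearMap
      (∫ x in c..d, Complex.exp (I * lam * φ2 x)))
      = (starRingEnd ℂ) (∫ x in c..d, Complex.exp (I * lam * φ2 x)) from rfl]
  rw [RCLike.norm_conj]
  apply lemA c d hcd lam δ hlam hδ φ2 (fun x => -f x) (fun x => -g x)
  · exact fun x hx => (hf x hx).neg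
  · exact fun x hx => (hg x hx).neg
  · exact hgc.neg
  · intro x hx
    have := hfδ x hx
    linarith
  · rcases hsign with hs | hs
    · right; intro x hx; simpa using hs x hx
    · left; intro x hx; simpa using hs x hx

private lemma lemB (c d : ℝ) (hcd : c ≤ d) (lam M : ℝ) (hlam : 0 < lam) (hM : 0 < M)
    (φ f g : ℝ → ℝ)
    (hf : ∀ x ∈ Icc c d, HasDerivWithinAt φ (f x) (Icc c d) x)
    (hg : ∀ x ∈ Icc c d, HasDerivWithinAt f (g x) (Icc c d) x)
    (hgc : ContinuousOn g (Icc c d))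
    (hgM : ∀ x ∈ Icc c d, M ≤ g x) :
    ‖∫ x in c..d, Complex.exp (I * lam * φ x)‖ ≤ 8 / Real.sqrt (lam * M) := by
  have hlamM : 0 < Real.sqrt (lam * M) := Real.sqrt_pos.2 (mul_pos hlam hM)
  set δ : ℝ := Real.sqrt (M / lam) with hδdef
  have hδpos : 0 < δ := Real.sqrt_pos.2 (div_pos hM hlam)
  have hlamδ : lam * δ = Real.sqrt (lam * M) := by
    rw [hδdef, show lam * M = lam ^ 2 * (M / lam) by field_simp,
      Real.sqrt_mul (sq_nonneg lam), Real.sqrt_sq hlam.le]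
  have hδM : δ / M = 1 / Real.sqrt (lam * M) := by
    have h1 : δ * Real.sqrt (lam * M) = M := by
      rw [hδdef, ← Real.sqrt_mul (div_nonneg hM.le hlam.le),
        show M / lam * (lam * M) = M ^ 2 by field_simp, Real.sqrt_sq hM.le]
    rw [div_eq_div_iff hM.ne' hlamM.ne', one_mul, h1]
  have hfc : ContinuousOn f (Icc c d) := fun x hx => (hg x hx).continuousWithinAt
  have hφc : ContinuousOn φ (Icc c d) := fun x hx => (hf x hx).continuousWithinAt
  have hmono : MonotoneOn f (Icc c d) := by
    apply monotoneOn_of_hasDerivWithinAt_nonneg (convex_Icc c d) hfc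
      (fun x hx => (hg x (interior_subset hx)).mono interior_subset)
    intro x hx
    exact le_trans hM.le (hgM x (interior_subset hx))
  have hmono2 : MonotoneOn (fun t => f t - M * t) (Icc c d) := by
    apply monotoneOn_of_hasDerivWithinAt_nonneg (convex_Icc c d)
      (f' := fun t => g t - M)
      (hfc.sub ((continuous_const.mul continuous_id).continuousOn))
    · intro x hx
      have hid : HasDerivWithinAt (fun t : ℝ => M * t) M (interior (Icc c d)) x := by
        simpa using (hasDerivWithinAt_id x (interior (Icc c d))).const_mul M
      exact ((hg x (interior_subset hx)).mono interior_subset).sub hid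
    · intro x hx
      have := hgM x (interior_subset hx)
      linarith
  have hEint : ∀ u v : ℝ, u ∈ Icc c d → v ∈ Icc c d →
      IntervalIntegrable (fun x => Complex.exp (I * lam * φ x)) volume u v := by
    intro u v hu hv
    apply ContinuousOn.intervalIntegrable
    apply (Complex.continuous_exp.comp_continuousOn
      (continuousOn_const.mul (Complex.continuous_ofReal.comp_continuousOn hφc))).mono
    exact uIcc_subset_Icc hu hv
  -- bound on subintervals where f ≥ δ
  have hup : ∀ u v : ℝ, u ∈ Icc c d → v ∈ Icc c d → u ≤ v → δ ≤ f u →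
      ‖∫ x in u..v, Complex.exp (I * lam * φ x)‖ ≤ 3 / (lam * δ) := by
    intro u v hu hv huv hδu
    have hsub : Icc u v ⊆ Icc c d := Icc_subset_Icc hu.1 hv.2
    apply lemA u v huv lam δ hlam hδpos φ f g
    · exact fun x hx => ((hf x (hsub hx)).mono hsub)
    · exact fun x hx => ((hg x (hsub hx)).mono hsub)
    · exact hgc.mono hsub
    · exact fun x hx => le_trans hδu (hmono hu (hsub hx) hx.1)
    · left; exact fun x hx => le_trans hM.le (hgM x (hsub hx))
  have hdown : ∀ u v : ℝ, u ∈ Icc c d → v ∈ Icc c d → u ≤ v → f v ≤ -δ →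
      ‖∫ x in u..v, Complex.exp (I * lam * φ x)‖ ≤ 3 / (lam * δ) := by
    intro u v hu hv huv hδv
    have hsub : Icc u v ⊆ Icc c d := Icc_subset_Icc hu.1 hv.2
    apply lemA' u v huv lam δ hlam hδpos φ f g
    · exact fun x hx => ((hf x (hsub hx)).mono hsub)
    · exact fun x hx => ((hg x (hsub hx)).mono hsub)
    · exact hgc.mono hsub
    · exact fun x hx => le_trans (hmono (hsub hx) hv hx.2) hδv
    · left; exact fun x hx => le_trans hM.le (hgM x (hsub hx))
  have h36 : (3:ℝ) / (lam * δ) = 3 / Real.sqrt (lam * M) := by rw [hlamδ]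
  have h38 : (3:ℝ) / Real.sqrt (lam * M) ≤ 8 / Real.sqrt (lam * M) := by
    exact (div_le_div_iff_of_pos_right hlamM).2 (by norm_num)
  by_cases h1 : δ ≤ f c
  · exact (hup c d (left_mem_Icc.2 hcd) (right_mem_Icc.2 hcd) hcd h1).trans (h36.le.trans h38)
  by_cases h2 : f d ≤ -δ
  · exact (hdown c d (left_mem_Icc.2 hcd) (right_mem_Icc.2 hcd) hcd h2).trans (h36.le.trans h38)
  push_neg at h1 h2
  obtain ⟨u, hu1, hu2, hu3⟩ : ∃ u, u ∈ Icc c d ∧ -δ ≤ f u ∧ (u = c ∨ f u = -δ) := by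
    by_cases hc : f c ≤ -δ
    · obtain ⟨u, huIcc, hfu⟩ := intermediate_value_Icc hcd hfc ⟨hc, h2.le⟩
      exact ⟨u, huIcc, hfu ▸ le_rfl, Or.inr hfu⟩
    · exact ⟨c, left_mem_Icc.2 hcd, (not_le.1 hc).le, Or.inl rfl⟩
  obtain ⟨v, hv1, hv2, hv3⟩ : ∃ v, v ∈ Icc c d ∧ f v ≤ δ ∧ (v = d ∨ f v = δ) := by
    by_cases hd : δ ≤ f d
    · obtain ⟨v, hvIcc, hfv⟩ := intermediate_value_Icc hcd hfc ⟨h1.le, hd⟩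
      exact ⟨v, hvIcc, hfv ▸ le_rfl, Or.inr hfv⟩
    · exact ⟨d, right_mem_Icc.2 hcd, (not_le.1 hd).le, Or.inl rfl⟩
  have huv : u ≤ v := by
    rcases hu3 with rfl | hu4
    · exact hv1.1
    rcases hv3 with rfl | hv4
    · exact hu1.2
    by_contra hlt
    push_neg at hlt
    have := hmono hv1 hu1 hlt.le
    rw [hu4, hv4] at this
    linarith
  have hlen : v - u ≤ 2 * δ / M := by
    have hm2 := hmono2 hu1 hv1 huv
    simp only at hm2
    have h2δ : f v - f u ≤ 2 * δ := by linarith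
    rw [le_div_iff₀ hM]
    nlinarith
  have hmid : ‖∫ x in u..v, Complex.exp (I * lam * φ x)‖ ≤ 2 * δ / M := by
    refine le_trans (intervalIntegral.norm_integral_le_of_norm_le_const (C := 1) ?_) ?_
    · intro x _
      exact (norm_exp_Ilam lam (φ x)).le
    · rw [one_mul, _root_.abs_of_nonneg (sub_nonneg.2 huv)]
      exact hlen
  have hleft : ‖∫ x in c..u, Complex.exp (I * lam * φ x)‖ ≤ 3 / (lam * δ) := by
    rcases hu3 with rfl | hu4
    · simp
      positivity
    · exact hdown c u (left_mem_Icc.2 hcd) hu1 hu1.1 hu4.le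
  have hright : ‖∫ x in v..d, Complex.exp (I * lam * φ x)‖ ≤ 3 / (lam * δ) := by
    rcases hv3 with rfl | hv4
    · simp
      positivity
    · exact hup v d hv1 (right_mem_Icc.2 hcd) hv1.2 hv4.ge
  have e1 : (∫ x in c..u, Complex.exp (I * lam * φ x)) + (∫ x in u..v, Complex.exp (I * lam * φ x))
      = ∫ x in c..v, Complex.exp (I * lam * φ x) :=
    intervalIntegral.integral_add_adjacent_intervals
      (hEint c u (left_mem_Icc.2 hcd) hu1) (hEint u v hu1 hv1)
  have e2 : (∫ x in c..v, Complex.exp (I * lam * φ x)) + (∫ x in v..d, Complex.exp (I * lam * φ x))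
      = ∫ x in c..d, Complex.exp (I * lam * φ x) :=
    intervalIntegral.integral_add_adjacent_intervals
      (hEint c v (left_mem_Icc.2 hcd) hv1) (hEint v d hv1 (right_mem_Icc.2 hcd))
  have h2δM : 2 * δ / M = 2 / Real.sqrt (lam * M) := by
    rw [mul_div_assoc, hδM]
    ring
  calc ‖∫ x in c..d, Complex.exp (I * lam * φ x)‖
      = ‖((∫ x in c..u, Complex.exp (I * lam * φ x))
          + (∫ x in u..v, Complex.exp (I * lam * φ x)))
          + (∫ x in v..d, Complex.exp (I * lam * φ x))‖ := by rw [e1, e2]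
    _ ≤ ‖(∫ x in c..u, Complex.exp (I * lam * φ x))
          + (∫ x in u..v, Complex.exp (I * lam * φ x))‖
          + ‖∫ x in v..d, Complex.exp (I * lam * φ x)‖ := norm_add_le _ _
    _ ≤ (‖∫ x in c..u, Complex.exp (I * lam * φ x)‖
          + ‖∫ x in u..v, Complex.exp (I * lam * φ x)‖)
          + ‖∫ x in v..d, Complex.exp (I * lam * φ x)‖ :=
        add_le_add_left (norm_add_le _ _) _
    _ ≤ (3 / (lam * δ) + 2 * δ / M) + 3 / (lam * δ) :=
        add_le_add (add_le_add hleft hmid) hright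
    _ = 3 / Real.sqrt (lam * M) + 2 / Real.sqrt (lam * M) + 3 / Real.sqrt (lam * M) := by
        rw [h36, h2δM]
    _ = 8 / Real.sqrt (lam * M) := by ring

private lemma lemB' (c d : ℝ) (hcd : c ≤ d) (lam M : ℝ) (hlam : 0 < lam) (hM : 0 < M)
    (φ f g : ℝ → ℝ)
    (hf : ∀ x ∈ Icc c d, HasDerivWithinAt φ (f x) (Icc c d) x)
    (hg : ∀ x ∈ Icc c d, HasDerivWithinAt f (g x) (Icc c d) x)
    (hgc : ContinuousOn g (Icc c d))
    (hgM : ∀ x ∈ Icc c d, g x ≤ -M) :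
    ‖∫ x in c..d, Complex.exp (I * lam * φ x)‖ ≤ 8 / Real.sqrt (lam * M) := by
  set φ2 : ℝ → ℝ := fun x => -φ x with hφ2
  have hconj : ∀ x : ℝ,
      Complex.exp (I * lam * φ x) = (starRingEnd ℂ) (Complex.exp (I * lam * φ2 x)) := by
    intro x
    rw [← Complex.exp_conj]
    congr 1
    rw [map_mul, map_mul, Complex.conj_I, Complex.conj_ofReal, Complex.conj_ofReal]
    rw [hφ2]
    push_cast
    ring
  have hφc : ContinuousOn φ (Icc c d) := fun x hx => (hf x hx).continuousWithinAt
  have hφ2c : ContinuousOn φ2 (Icc c d) := hφc.neg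
  have hEc' : ContinuousOn (fun x => Complex.exp (I * lam * φ2 x)) (Icc c d) :=
    Complex.continuous_exp.comp_continuousOn
      (continuousOn_const.mul (Complex.continuous_ofReal.comp_continuousOn hφ2c))
  have hint : IntervalIntegrable (fun x => Complex.exp (I * lam * φ2 x)) volume c d :=
    (hEc'.mono (le_of_eq (uIcc_of_le hcd))).intervalIntegrable
  have hrw : (∫ x in c..d, Complex.exp (I * lam * φ x))
      = Complex.conjCLE.toContinuousLinearMap (∫ x in c..d, Complex.exp (I * lam * φ2 x)) := by
    rw [← ContinuousLinearMap.intervalIntegral_comp_comm _ hint]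
    exact intervalIntegral.integral_congr (fun x _ => hconj x)
  rw [hrw]
  rw [show (Complex.conjCLE.toContinuousLinearMap
      (∫ x in c..d, Complex.exp (I * lam * φ2 x)))
      = (starRingEnd ℂ) (∫ x in c..d, Complex.exp (I * lam * φ2 x)) from rfl]
  rw [RCLike.norm_conj]
  apply lemB c d hcd lam M hlam hM φ2 (fun x => -f x) (fun x => -g x)
  · exact fun x hx => (hf x hx).neg
  · exact fun x hx => (hg x hx).neg
  · exact hgc.neg
  · intro x hx
    have := hgM x hx
    linarith

theorem stmt_10 (a b : ℝ) (hab : a < b) (lam M : ℝ) (hlam : 0 < lam) (hM : 0 < M)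
    (Φ : ℝ → ℝ) (Ψ : ℝ → ℂ)
    (hΦ : ContDiffOn ℝ 2 Φ (Icc a b))
    (hΦ'' : ∀ x ∈ Icc a b, M ≤ |iteratedDerivWithin 2 Φ (Icc a b) x|)
    (hΨ : ContDiffOn ℝ 1 Ψ (Icc a b)) :
    ‖∫ x in a..b, Complex.exp (I * lam * Φ x) * Ψ x‖
      ≤ 8 / Real.sqrt (lam * M)
          * (‖Ψ b‖ + ∫ x in a..b, ‖derivWithin Ψ (Icc a b) x‖) := by
  have hs : UniqueDiffOn ℝ (Icc a b) := uniqueDiffOn_Icc hab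
  set f : ℝ → ℝ := derivWithin Φ (Icc a b) with hfdef
  set g : ℝ → ℝ := iteratedDerivWithin 2 Φ (Icc a b) with hgdef
  have hfd : ∀ x ∈ Icc a b, HasDerivWithinAt Φ (f x) (Icc a b) x := fun x hx =>
    (hΦ.differentiableOn (by norm_num) x hx).hasDerivWithinAt
  have hf1 : ContDiffOn ℝ 1 f (Icc a b) := hΦ.derivWithin hs (by norm_num)
  have hgeq : ∀ x ∈ Icc a b, derivWithin f (Icc a b) x = g x := by
    intro x hx
    have h2 : g x = derivWithin (iteratedDerivWithin 1 Φ (Icc a b)) (Icc a b) x :=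
      congrFun iteratedDerivWithin_succ x
    rw [h2]
    exact (derivWithin_congr (fun y hy => congrFun iteratedDerivWithin_one y)
      (congrFun iteratedDerivWithin_one x)).symm
  have hgd : ∀ x ∈ Icc a b, HasDerivWithinAt f (g x) (Icc a b) x := by
    intro x hx
    have h := (hf1.differentiableOn one_ne_zero x hx).hasDerivWithinAt
    rwa [hgeq x hx] at h
  have hgc : ContinuousOn g (Icc a b) :=
    hΦ.continuousOn_iteratedDerivWithin (by norm_num) hs
  have hnz : ∀ x ∈ Icc a b, g x ≠ 0 := by
    intro x hx h0
    have h := hΦ'' x hx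
    rw [h0] at h
    simp at h
    linarith
  have hsgn : (∀ x ∈ Icc a b, M ≤ g x) ∨ (∀ x ∈ Icc a b, g x ≤ -M) := by
    have habs : ∀ x ∈ Icc a b, M ≤ g x ∨ g x ≤ -M := by
      intro x hx
      have h := hΦ'' x hx
      rcases abs_cases (g x) with ⟨h1, _⟩ | ⟨h1, _⟩
      · left; linarith
      · right; linarith
    have hamem : a ∈ Icc a b := left_mem_Icc.2 hab.le
    rcases habs a hamem with hga | hga
    · left
      intro x hx
      rcases habs x hx with h | h
      · exact h
      · exfalso
        have hsub : uIcc a x ⊆ Icc a b := uIcc_subset_Icc hamem hx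
        have h0 : (0:ℝ) ∈ uIcc (g a) (g x) :=
          mem_uIcc.2 (Or.inr ⟨by linarith, by linarith⟩)
        obtain ⟨z, hz, hz0⟩ := intermediate_value_uIcc (hgc.mono hsub) h0
        exact hnz z (hsub hz) hz0
    · right
      intro x hx
      rcases habs x hx with h | h
      · exfalso
        have hsub : uIcc a x ⊆ Icc a b := uIcc_subset_Icc hamem hx
        have h0 : (0:ℝ) ∈ uIcc (g a) (g x) :=
          mem_uIcc.2 (Or.inl ⟨by linarith, by linarith⟩)
        obtain ⟨z, hz, hz0⟩ := intermediate_value_uIcc (hgc.mono hsub) h0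
        exact hnz z (hsub hz) hz0
      · exact h
  set E : ℝ → ℂ := fun t => Complex.exp (I * lam * Φ t) with hEdef
  have hEc : ContinuousOn E (Icc a b) :=
    Complex.continuous_exp.comp_continuousOn
      (continuousOn_const.mul (Complex.continuous_ofReal.comp_continuousOn hΦ.continuousOn))
  have hEint : ∀ u v : ℝ, u ∈ Icc a b → v ∈ Icc a b → IntervalIntegrable E volume u v :=
    fun u v hu hv => (hEc.mono (uIcc_subset_Icc hu hv)).intervalIntegrable
  set C : ℝ := 8 / Real.sqrt (lam * M) with hCdef
  have hC : 0 ≤ C := by positivity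
  set F : ℝ → ℂ := fun x => ∫ t in a..x, E t with hFdef
  have hF : ∀ x ∈ Icc a b, ‖F x‖ ≤ C := by
    intro x hx
    have hsub : Icc a x ⊆ Icc a b := Icc_subset_Icc le_rfl hx.2
    rcases hsgn with hsg | hsg
    · exact lemB a x hx.1 lam M hlam hM Φ f g
        (fun y hy => (hfd y (hsub hy)).mono hsub)
        (fun y hy => (hgd y (hsub hy)).mono hsub)
        (hgc.mono hsub) (fun y hy => hsg y (hsub hy))
    · exact lemB' a x hx.1 lam M hlam hM Φ f g
        (fun y hy => (hfd y (hsub hy)).mono hsub)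
        (fun y hy => (hgd y (hsub hy)).mono hsub)
        (hgc.mono hsub) (fun y hy => hsg y (hsub hy))
  have hFc : ContinuousOn F (Icc a b) := by
    have h := continuousOn_primitive_interval (f := E) (a := a) (b := b) (μ := volume)
      (by rw [uIcc_of_le hab.le]; exact hEc.integrableOn_Icc)
    rwa [uIcc_of_le hab.le] at h
  have hΨc : ContinuousOn Ψ (Icc a b) := hΨ.continuousOn
  set Ψ' : ℝ → ℂ := derivWithin Ψ (Icc a b) with hΨ'def
  have hΨd : ∀ x ∈ Icc a b, HasDerivWithinAt Ψ (Ψ' x) (Icc a b) x := fun x hx =>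
    (hΨ.differentiableOn one_ne_zero x hx).hasDerivWithinAt
  have hΨ'c : ContinuousOn Ψ' (Icc a b) := hΨ.continuousOn_derivWithin hs le_rfl
  have hint1 : IntervalIntegrable (fun x => E x * Ψ x) volume a b :=
    ((hEc.mul hΨc).mono (le_of_eq (uIcc_of_le hab.le))).intervalIntegrable
  have hint2 : IntervalIntegrable (fun x => F x * Ψ' x) volume a b :=
    ((hFc.mul hΨ'c).mono (le_of_eq (uIcc_of_le hab.le))).intervalIntegrable
  have hFTC : ∫ x in a..b, (E x * Ψ x + F x * Ψ' x) = F b * Ψ b - F a * Ψ a := by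
    apply integral_eq_sub_of_hasDeriv_right_of_le hab.le (hFc.mul hΨc)
    · intro x hx
      have hmem : Icc a b ∈ nhds x := Icc_mem_nhds hx.1 hx.2
      have hmeas : StronglyMeasurableAtFilter E (nhds x) volume :=
        (hEc.mono Ioo_subset_Icc_self).stronglyMeasurableAtFilter isOpen_Ioo x hx
      have hFd : HasDerivAt F (E x) x :=
        intervalIntegral.integral_hasDerivAt_right
          (hEint a x (left_mem_Icc.2 hab.le) (Ioo_subset_Icc_self hx)) hmeas
          (hEc.continuousAt hmem)
      have hΨdx : HasDerivAt Ψ (Ψ' x) x :=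
        (hΨd x (Ioo_subset_Icc_self hx)).hasDerivAt hmem
      exact (hFd.mul hΨdx).hasDerivWithinAt
    · exact hint1.add hint2
  have hFa : F a = 0 := intervalIntegral.integral_same
  have hsplit : (∫ x in a..b, E x * Ψ x)
      = F b * Ψ b - ∫ x in a..b, F x * Ψ' x := by
    rw [intervalIntegral.integral_add hint1 hint2, hFa] at hFTC
    linear_combination hFTC
  have hnormint : ‖∫ x in a..b, F x * Ψ' x‖ ≤ C * ∫ x in a..b, ‖Ψ' x‖ := by
    refine le_trans (intervalIntegral.norm_integral_le_integral_norm hab.le) ?_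
    rw [← intervalIntegral.integral_const_mul]
    apply intervalIntegral.integral_mono_on hab.le
    · exact (((hFc.mul hΨ'c).norm).mono (le_of_eq (uIcc_of_le hab.le))).intervalIntegrable
    · exact ((continuousOn_const.mul hΨ'c.norm).mono
        (le_of_eq (uIcc_of_le hab.le))).intervalIntegrable
    · intro x hx
      rw [norm_mul]
      exact mul_le_mul_of_nonneg_right (hF x hx) (norm_nonneg _)
  calc ‖∫ x in a..b, E x * Ψ x‖
      = ‖F b * Ψ b - ∫ x in a..b, F x * Ψ' x‖ := by rw [hsplit]
    _ ≤ ‖F b * Ψ b‖ + ‖∫ x in a..b, F x * Ψ' x‖ := norm_sub_le _ _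
    _ ≤ C * ‖Ψ b‖ + C * ∫ x in a..b, ‖Ψ' x‖ := by
        apply add_le_add _ hnormint
        rw [norm_mul]
        exact mul_le_mul_of_nonneg_right (hF b (right_mem_Icc.2 hab.le)) (norm_nonneg _)
    _ = C * (‖Ψ b‖ + ∫ x in a..b, ‖Ψ' x‖) := by ring
end

section
/- Let t > 0, and let c, L ∈ ℝ and α ≤ β be real numbers. Then ‖∫_α^β e^{i(tμ² + cμ)}/(e^{iμL} − 3) dμ‖ ≤ 2√2/√t. -/
open Complex

open intervalIntegral in

lemma aux_ibp (t δ x : ℝ) (ht : 0 < t) (hδ : 0 < δ) (hx : δ ≤ x) :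
    ‖∫ μ in δ..x, Complex.exp (I * t * μ ^ 2)‖ ≤ 1 / (t * δ) := by
  have hx0 : 0 < x := lt_of_lt_of_le hδ hx
  set u : ℝ → ℂ := fun μ => (2 * (t:ℂ) * I)⁻¹ * ((μ:ℂ))⁻¹ with hu_def
  set u' : ℝ → ℂ := fun μ => (2 * (t:ℂ) * I)⁻¹ * (-(((μ:ℂ)) ^ 2)⁻¹) with hu'_def
  set v : ℝ → ℂ := fun μ => Complex.exp (I * t * (μ:ℂ) ^ 2) with hv_def
  set v' : ℝ → ℂ := fun μ => Complex.exp (I * t * (μ:ℂ) ^ 2) * (I * t * (2 * μ)) with hv'_def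
  have huIcc : ∀ μ ∈ Set.uIcc δ x, δ ≤ μ := by
    intro μ hμ
    rw [Set.uIcc_of_le hx] at hμ
    exact hμ.1
  have ht' : (t:ℂ) ≠ 0 := by exact_mod_cast ht.ne'
  have hu : ∀ μ ∈ Set.uIcc δ x, HasDerivAt u (u' μ) μ := by
    intro μ hμ
    have hμ0 : (μ:ℂ) ≠ 0 := by
      exact_mod_cast (lt_of_lt_of_le hδ (huIcc μ hμ)).ne'
    exact (((hasDerivAt_inv hμ0).const_mul ((2 * (t:ℂ) * I)⁻¹)).comp_ofReal)
  have hv : ∀ μ ∈ Set.uIcc δ x, HasDerivAt v (v' μ) μ := by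
    intro μ hμ
    have h1 : HasDerivAt (fun z : ℂ => I * t * z ^ 2) (I * t * (2 * μ)) (μ:ℂ) := by
      simpa [mul_comm, mul_assoc] using ((hasDerivAt_pow 2 ((μ:ℂ))).const_mul (I * (t:ℂ)))
    exact ((Complex.hasDerivAt_exp _).comp _ h1).comp_ofReal
  have hu'int : IntervalIntegrable u' MeasureTheory.volume δ x := by
    apply ContinuousOn.intervalIntegrable
    apply ContinuousOn.mul continuousOn_const
    apply ContinuousOn.neg
    apply ContinuousOn.inv₀
    · fun_prop
    · intro μ hμ
      have h : (0:ℝ) < μ := lt_of_lt_of_le hδ (huIcc μ hμ)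
      exact pow_ne_zero 2 (by exact_mod_cast h.ne' : (μ:ℂ) ≠ 0)
  have hv'int : IntervalIntegrable v' MeasureTheory.volume δ x := by
    apply Continuous.intervalIntegrable
    fun_prop
  have ibp := integral_mul_deriv_eq_deriv_mul hu hv hu'int hv'int
  have hcongr : ∫ μ in δ..x, Complex.exp (I * t * μ ^ 2) = ∫ μ in δ..x, u μ * v' μ := by
    apply integral_congr
    intro μ hμ
    have hμ0 : (μ:ℂ) ≠ 0 := by exact_mod_cast (lt_of_lt_of_le hδ (huIcc μ hμ)).ne'
    simp only [hu_def, hv'_def]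
    field_simp
  have hnormv : ∀ μ : ℝ, ‖v μ‖ = 1 := by
    intro μ
    rw [hv_def]
    simp only []
    rw [show (I*(t:ℂ)*(μ:ℂ)^2) = ((t*μ^2:ℝ):ℂ)*I by push_cast; ring]
    exact Complex.norm_exp_ofReal_mul_I _
  have hnormu : ∀ μ : ℝ, 0 < μ → ‖u μ‖ = (2 * t * μ)⁻¹ := by
    intro μ hμ
    simp [hu_def, norm_mul, norm_inv, Complex.norm_real,
      abs_of_pos ht, abs_of_pos hμ, mul_inv]
    ring
  have hnormu' : ∀ μ : ℝ, ‖u' μ‖ = (2 * t)⁻¹ * (μ ^ 2)⁻¹ := by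
    intro μ
    simp [hu'_def, norm_mul, norm_inv, Complex.norm_real,
      abs_of_pos ht, _root_.sq_abs, mul_inv]
  have hftc : ∫ μ in δ..x, (2*t)⁻¹*((μ:ℝ)^2)⁻¹ = (-(2*t)⁻¹*x⁻¹) - (-(2*t)⁻¹*δ⁻¹) := by
    apply intervalIntegral.integral_eq_sub_of_hasDerivAt
    · intro μ hμ
      have hμ0 : μ ≠ 0 := (lt_of_lt_of_le hδ (huIcc μ hμ)).ne'
      have h := (hasDerivAt_inv hμ0).const_mul (-(2*t)⁻¹ : ℝ)
      convert h using 1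
      · rfl
      ring
    · apply ContinuousOn.intervalIntegrable
      apply ContinuousOn.mul continuousOn_const
      apply ContinuousOn.inv₀
      · fun_prop
      · intro μ hμ
        have h : (0:ℝ) < μ := lt_of_lt_of_le hδ (huIcc μ hμ)
        positivity
  have hC : ‖∫ μ in δ..x, u' μ * v μ‖ ≤ (2*t)⁻¹*δ⁻¹ - (2*t)⁻¹*x⁻¹ := by
    calc ‖∫ μ in δ..x, u' μ * v μ‖ ≤ ∫ μ in δ..x, ‖u' μ * v μ‖ :=
          intervalIntegral.norm_integral_le_integral_norm hx
      _ = ∫ μ in δ..x, (2*t)⁻¹*((μ:ℝ)^2)⁻¹ := by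
          apply integral_congr
          intro μ hμ
          simp only [norm_mul, hnormu' μ, hnormv, mul_one]
      _ = (-(2*t)⁻¹*x⁻¹) - (-(2*t)⁻¹*δ⁻¹) := hftc
      _ ≤ (2*t)⁻¹*δ⁻¹ - (2*t)⁻¹*x⁻¹ := le_of_eq (by ring)
  have hA : ‖u x * v x‖ = (2*t*x)⁻¹ := by rw [norm_mul, hnormu x hx0, hnormv, mul_one]
  have hB : ‖u δ * v δ‖ = (2*t*δ)⁻¹ := by rw [norm_mul, hnormu δ hδ, hnormv, mul_one]
  have step : ‖u x * v x - u δ * v δ - ∫ μ in δ..x, u' μ * v μ‖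
      ≤ (2*t*x)⁻¹ + (2*t*δ)⁻¹ + ((2*t)⁻¹*δ⁻¹ - (2*t)⁻¹*x⁻¹) := by
    calc ‖u x * v x - u δ * v δ - ∫ μ in δ..x, u' μ * v μ‖
        ≤ ‖u x * v x - u δ * v δ‖ + ‖∫ μ in δ..x, u' μ * v μ‖ := norm_sub_le _ _
      _ ≤ (‖u x * v x‖ + ‖u δ * v δ‖) + ((2*t)⁻¹*δ⁻¹ - (2*t)⁻¹*x⁻¹) :=
          add_le_add (norm_sub_le _ _) hC
      _ = (2*t*x)⁻¹ + (2*t*δ)⁻¹ + ((2*t)⁻¹*δ⁻¹ - (2*t)⁻¹*x⁻¹) := by rw [hA, hB]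
  rw [show intervalIntegral v δ x MeasureTheory.volume = ∫ μ in δ..x, u μ * v' μ from hcongr, ibp]
  refine le_trans step (le_of_eq ?_)
  field_simp
  ring

lemma aux_cont (t : ℝ) : Continuous (fun μ : ℝ => Complex.exp (I * t * (μ:ℂ) ^ 2)) := by
  fun_prop

lemma aux_F (t : ℝ) (ht : 0 < t) (x : ℝ) :
    ‖∫ μ in (0:ℝ)..x, Complex.exp (I * t * μ ^ 2)‖ ≤ 2 / Real.sqrt t := by
  have hst : 0 < Real.sqrt t := Real.sqrt_pos.mpr ht
  set δ : ℝ := (Real.sqrt t)⁻¹ with hδ_def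
  have hδ : 0 < δ := inv_pos.mpr hst
  have htδ : t * δ = Real.sqrt t := by
    rw [hδ_def]
    rw [← Real.mul_self_sqrt ht.le]
    field_simp
    rw [Real.sqrt_sq hst.le]
  have hsmall : ∀ y : ℝ, 0 ≤ y → y ≤ δ →
      ‖∫ μ in (0:ℝ)..y, Complex.exp (I * t * μ ^ 2)‖ ≤ δ := by
    intro y hy0 hyδ
    have := intervalIntegral.norm_integral_le_of_norm_le_const
      (C := 1) (f := fun μ : ℝ => Complex.exp (I * t * (μ:ℂ) ^ 2)) (a := (0:ℝ)) (b := y) ?_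
    · calc ‖∫ μ in (0:ℝ)..y, Complex.exp (I * t * μ ^ 2)‖ ≤ 1 * |y - 0| := this
        _ = y := by rw [sub_zero, _root_.abs_of_nonneg hy0, one_mul]
        _ ≤ δ := hyδ
    · intro μ _
      show ‖Complex.exp (I * t * (μ:ℂ) ^ 2)‖ ≤ 1
      rw [show (I*(t:ℂ)*(μ:ℂ)^2) = ((t*μ^2:ℝ):ℂ)*I by push_cast; ring,
        Complex.norm_exp_ofReal_mul_I]
  have key : ∀ y : ℝ, 0 ≤ y →
      ‖∫ μ in (0:ℝ)..y, Complex.exp (I * t * μ ^ 2)‖ ≤ 2 / Real.sqrt t := by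
    intro y hy0
    rcases le_or_gt y δ with hyδ | hyδ
    · calc ‖∫ μ in (0:ℝ)..y, Complex.exp (I * t * μ ^ 2)‖ ≤ δ := hsmall y hy0 hyδ
        _ ≤ 2 / Real.sqrt t := by
          rw [hδ_def, inv_eq_one_div]
          exact div_le_div_of_nonneg_right (by norm_num) hst.le
    · have hsplit : (∫ μ in (0:ℝ)..δ, Complex.exp (I * t * (μ:ℂ) ^ 2))
          + (∫ μ in δ..y, Complex.exp (I * t * (μ:ℂ) ^ 2))
          = ∫ μ in (0:ℝ)..y, Complex.exp (I * t * (μ:ℂ) ^ 2) :=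
        intervalIntegral.integral_add_adjacent_intervals
          ((aux_cont t).intervalIntegrable _ _) ((aux_cont t).intervalIntegrable _ _)
      rw [← hsplit]
      calc ‖_ + _‖ ≤ ‖∫ μ in (0:ℝ)..δ, Complex.exp (I * t * (μ:ℂ) ^ 2)‖
            + ‖∫ μ in δ..y, Complex.exp (I * t * (μ:ℂ) ^ 2)‖ := norm_add_le _ _
        _ ≤ δ + 1 / (t * δ) := add_le_add (hsmall δ hδ.le le_rfl)
            (by simpa using aux_ibp t δ y ht hδ hyδ.le)
        _ = 2 / Real.sqrt t := by
          rw [htδ, hδ_def, inv_eq_one_div]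
          ring
  rcases le_or_gt 0 x with hx | hx
  · exact key x hx
  · have hflip : (∫ μ in (0:ℝ)..x, Complex.exp (I * t * (μ:ℂ) ^ 2))
        = - ∫ μ in (0:ℝ)..(-x), Complex.exp (I * t * (μ:ℂ) ^ 2) := by
      have h1 : (∫ μ in (0:ℝ)..(-x), Complex.exp (I * t * (μ:ℂ) ^ 2))
          = ∫ μ in (0:ℝ)..(-x), Complex.exp (I * t * ((-μ:ℝ):ℂ) ^ 2) := by
        apply intervalIntegral.integral_congr
        intro μ _
        push_cast
        ring_nf
      rw [h1, intervalIntegral.integral_comp_neg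
        (fun μ : ℝ => Complex.exp (I * t * (μ:ℂ) ^ 2))]
      simp only [neg_neg, neg_zero]
      exact intervalIntegral.integral_symm (f := fun μ : ℝ => Complex.exp (I * t * (μ:ℂ) ^ 2)) (μ := MeasureTheory.volume) x 0
    rw [hflip, norm_neg]
    exact key (-x) (by linarith)

lemma aux_ab (t : ℝ) (ht : 0 < t) (a b : ℝ) :
    ‖∫ μ in a..b, Complex.exp (I * t * μ ^ 2)‖ ≤ 4 / Real.sqrt t := by
  have hsplit : (∫ μ in a..(0:ℝ), Complex.exp (I * t * (μ:ℂ) ^ 2))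
      + (∫ μ in (0:ℝ)..b, Complex.exp (I * t * (μ:ℂ) ^ 2))
      = ∫ μ in a..b, Complex.exp (I * t * (μ:ℂ) ^ 2) :=
    intervalIntegral.integral_add_adjacent_intervals
      ((aux_cont t).intervalIntegrable _ _) ((aux_cont t).intervalIntegrable _ _)
  rw [← hsplit]
  have h1 : ‖∫ μ in a..(0:ℝ), Complex.exp (I * t * (μ:ℂ) ^ 2)‖ ≤ 2 / Real.sqrt t := by
    rw [intervalIntegral.integral_symm, norm_neg]
    exact aux_F t ht a
  calc ‖_ + _‖ ≤ _ + _ := norm_add_le _ _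
    _ ≤ 2 / Real.sqrt t + 2 / Real.sqrt t := add_le_add h1 (aux_F t ht b)
    _ = 4 / Real.sqrt t := by ring

lemma aux_lin (t : ℝ) (ht : 0 < t) (c a b : ℝ) :
    ‖∫ μ in a..b, Complex.exp (I * (t * μ ^ 2 + c * μ))‖ ≤ 4 / Real.sqrt t := by
  set s : ℝ := c / (2 * t) with hs_def
  have hpt : ∀ μ : ℝ, Complex.exp (I * (t * μ ^ 2 + c * μ))
      = Complex.exp (((-(c^2/(4*t)):ℝ):ℂ) * I) * Complex.exp (I * t * ((μ + s : ℝ):ℂ) ^ 2) := by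
    intro μ
    rw [← Complex.exp_add]
    congr 1
    have ht' : (t:ℂ) ≠ 0 := by exact_mod_cast ht.ne'
    rw [hs_def]
    push_cast
    field_simp
    ring
  have h1 : (∫ μ in a..b, Complex.exp (I * (t * μ ^ 2 + c * μ)))
      = Complex.exp (((-(c^2/(4*t)):ℝ):ℂ) * I)
        * ∫ μ in a..b, Complex.exp (I * t * ((μ + s : ℝ):ℂ) ^ 2) := by
    rw [← intervalIntegral.integral_const_mul]
    exact intervalIntegral.integral_congr fun μ _ => hpt μ
  rw [h1, norm_mul, Complex.norm_exp_ofReal_mul_I, one_mul]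
  rw [intervalIntegral.integral_comp_add_right
    (fun μ : ℝ => Complex.exp (I * t * (μ:ℂ) ^ 2)) s]
  exact aux_ab t ht (a + s) (b + s)

theorem stmt_12 (t : ℝ) (ht : 0 < t) (c L : ℝ) (α β : ℝ) (hαβ : α ≤ β) :
    ‖∫ μ in α..β,
        Complex.exp (I * (t * μ ^ 2 + c * μ)) / (Complex.exp (I * μ * L) - 3)‖
      ≤ 2 * Real.sqrt 2 / Real.sqrt t := by
  have hst : 0 < Real.sqrt t := Real.sqrt_pos.mpr ht
  set g : ℕ → ℝ → ℂ := fun k μ =>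
    -((1/3:ℂ) ^ (k+1)) * Complex.exp (I * (t * μ ^ 2 + (c + k * L) * μ)) with hg_def
  -- norm of each term
  have hnorm_exp : ∀ (r : ℝ), ‖Complex.exp (((r:ℝ):ℂ) * I)‖ = 1 := fun r => by
    rw [Complex.norm_exp_ofReal_mul_I]
  have hnorm_phase : ∀ (c' μ : ℝ), ‖Complex.exp (I * ((t:ℂ) * μ ^ 2 + c' * μ))‖ = 1 := by
    intro c' μ
    rw [show (I * ((t:ℂ) * μ ^ 2 + c' * μ)) = ((t * μ^2 + c'*μ : ℝ):ℂ) * I by push_cast; ring]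
    exact hnorm_exp _
  have hnorm_g : ∀ k μ, ‖g k μ‖ = (1/3:ℝ) ^ (k+1) := by
    intro k μ
    rw [hg_def]
    simp only [norm_mul, norm_neg, norm_pow]
    rw [show (I * ((t:ℂ) * μ ^ 2 + ((c:ℂ) + (k:ℂ) * (L:ℂ)) * μ))
        = ((t * μ^2 + (c + k*L)*μ : ℝ):ℂ) * I by push_cast; ring]
    rw [hnorm_exp]
    norm_num
  -- pointwise series expansion
  have hpt : ∀ μ : ℝ,
      Complex.exp (I * (t * μ ^ 2 + c * μ)) / (Complex.exp (I * μ * L) - 3)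
        = ∑' k : ℕ, g k μ := by
    intro μ
    set z : ℂ := Complex.exp (I * μ * L) with hz_def
    have hznorm : ‖z‖ = 1 := by
      rw [hz_def, show (I * (μ:ℂ) * L) = ((μ * L : ℝ):ℂ) * I by push_cast; ring]
      exact hnorm_exp _
    have hz3 : ‖z / 3‖ < 1 := by
      rw [norm_div, hznorm]
      norm_num
    have hgeo : ∑' k : ℕ, (z / 3) ^ k = (1 - z / 3)⁻¹ := tsum_geometric_of_norm_lt_one hz3
    have hz3' : (1 : ℂ) - z / 3 ≠ 0 := by
      intro h
      have : z = 3 := by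
        field_simp at h
        linear_combination -h
      rw [this] at hznorm
      norm_num at hznorm
    have hterm : ∀ k : ℕ, g k μ
        = Complex.exp (I * (t * μ ^ 2 + c * μ)) * (-(1/3:ℂ)) * (z / 3) ^ k := by
      intro k
      rw [hg_def, hz_def]
      simp only [div_pow, ← Complex.exp_nat_mul]
      rw [show ((k:ℂ) * (I * μ * L)) = I * ((k * L : ℝ) * μ) by push_cast; ring]
      rw [show (I * ((t:ℂ) * μ ^ 2 + (c + k * L) * μ))
          = I * ((t:ℂ) * μ ^ 2 + c * μ) + I * ((k * L : ℝ) * μ) by push_cast; ring]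
      rw [Complex.exp_add]
      push_cast
      field_simp
      ring
    calc Complex.exp (I * (t * μ ^ 2 + c * μ)) / (z - 3)
        = Complex.exp (I * (t * μ ^ 2 + c * μ)) * (-(1/3:ℂ)) * (1 - z/3)⁻¹ := by
          have h1 : z - 3 = -3 * (1 - z/3) := by ring
          rw [div_eq_mul_inv, h1, mul_inv, mul_assoc]
          norm_num
      _ = Complex.exp (I * (t * μ ^ 2 + c * μ)) * (-(1/3:ℂ)) * ∑' k : ℕ, (z/3) ^ k := by
          rw [hgeo]
      _ = ∑' k : ℕ, Complex.exp (I * (t * μ ^ 2 + c * μ)) * (-(1/3:ℂ)) * (z/3) ^ k := by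
          rw [tsum_mul_left]
      _ = ∑' k : ℕ, g k μ := by
          exact tsum_congr fun k => (hterm k).symm
  -- swap integral and sum
  have hmeas : ∀ k : ℕ, MeasureTheory.AEStronglyMeasurable (g k)
      (MeasureTheory.volume.restrict (Set.Ioc α β)) := by
    intro k
    apply Continuous.aestronglyMeasurable
    rw [hg_def]
    fun_prop
  set V : ENNReal := MeasureTheory.volume (Set.Ioc α β) with hV_def
  have hVlt : V < ⊤ := measure_Ioc_lt_top
  have hlint : ∀ k : ℕ, (∫⁻ μ in Set.Ioc α β, ‖g k μ‖₊)
      ≤ ENNReal.ofReal ((1/3:ℝ)^(k+1)) * V := by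
    intro k
    apply le_of_eq
    calc (∫⁻ μ in Set.Ioc α β, ‖g k μ‖₊)
        = ∫⁻ _ in Set.Ioc α β, ENNReal.ofReal ((1/3:ℝ)^(k+1)) := by
          apply MeasureTheory.lintegral_congr
          intro μ
          rw [← enorm_eq_nnnorm, ← ofReal_norm, hnorm_g k μ]
      _ = ENNReal.ofReal ((1/3:ℝ)^(k+1)) * V := by
          rw [MeasureTheory.lintegral_const, MeasureTheory.Measure.restrict_apply_univ]
  have hsum_fin : (∑' k : ℕ, ∫⁻ μ in Set.Ioc α β, ‖g k μ‖₊) ≠ ⊤ := by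
    apply ne_top_of_le_ne_top _ (ENNReal.tsum_le_tsum hlint)
    have : ∀ k : ℕ, ENNReal.ofReal ((1/3:ℝ)^(k+1)) * V
        = (ENNReal.ofReal (1/3:ℝ))^(k+1) * V := by
      intro k
      rw [ENNReal.ofReal_pow (by norm_num)]
    rw [tsum_congr this, ENNReal.tsum_mul_right, ENNReal.tsum_geometric_add_one]
    apply ENNReal.mul_ne_top (ENNReal.mul_ne_top ENNReal.ofReal_ne_top _) hVlt.ne
    rw [Ne, ENNReal.inv_eq_top, tsub_eq_zero_iff_le]
    exact not_le.mpr (ENNReal.ofReal_lt_one.mpr (by norm_num))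
  have hswap := MeasureTheory.integral_tsum hmeas hsum_fin
  have hterm_bound : ∀ k : ℕ, ‖∫ μ in Set.Ioc α β, g k μ‖ ≤ (1/3:ℝ)^(k+1) * (4 / Real.sqrt t) := by
    intro k
    rw [← intervalIntegral.integral_of_le hαβ]
    have h1 : (∫ μ in α..β, g k μ)
        = -((1/3:ℂ)^(k+1)) * ∫ μ in α..β, Complex.exp (I * (t * μ ^ 2 + ((c + k*L : ℝ):ℂ) * μ)) := by
      rw [← intervalIntegral.integral_const_mul]
      apply intervalIntegral.integral_congr
      intro μ _
      rw [hg_def]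
      push_cast
      ring_nf
    rw [h1, norm_mul]
    have h2 : ‖-((1/3:ℂ)^(k+1))‖ = (1/3:ℝ)^(k+1) := by
      simp only [norm_neg, norm_pow]
      norm_num
    rw [h2]
    exact mul_le_mul_of_nonneg_left (aux_lin t ht (c + k*L) α β) (by positivity)
  have hB : HasSum (fun k : ℕ => (1/3:ℝ)^(k+1) * (4 / Real.sqrt t)) (1/2 * (4 / Real.sqrt t)) := by
    have h0 : HasSum (fun k : ℕ => (1/3:ℝ)^k) (3/2) := by
      have := hasSum_geometric_of_lt_one (r := (1/3:ℝ)) (by norm_num) (by norm_num)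
      convert this using 1
      norm_num
    have h1 := (h0.mul_left (1/3:ℝ)).mul_right (4 / Real.sqrt t)
    convert h1 using 2 with k
    · rfl
    · ring
    · ring
  have hfinal : ‖∫ μ in Set.Ioc α β,
      Complex.exp (I * (t * μ ^ 2 + c * μ)) / (Complex.exp (I * μ * L) - 3)‖
      ≤ 1/2 * (4 / Real.sqrt t) := by
    have heq : (∫ μ in Set.Ioc α β,
        Complex.exp (I * (t * μ ^ 2 + c * μ)) / (Complex.exp (I * μ * L) - 3))
        = ∑' k : ℕ, ∫ μ in Set.Ioc α β, g k μ := by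
      rw [← hswap]
      apply MeasureTheory.integral_congr_ae
      exact MeasureTheory.ae_of_all _ fun μ => hpt μ
    rw [heq]
    exact tsum_of_norm_bounded hB hterm_bound
  rw [intervalIntegral.integral_of_le hαβ]
  refine hfinal.trans ?_
  have h2 : (1:ℝ) ≤ Real.sqrt 2 := by
    nlinarith [Real.sq_sqrt (by norm_num : (0:ℝ) ≤ 2), Real.sqrt_nonneg 2]
  rw [show (1:ℝ)/2 * (4 / Real.sqrt t) = 2 / Real.sqrt t by ring]
  apply div_le_div_of_nonneg_right (by nlinarith) hst.le
end

section
/- Let t > 0, and let c, L ∈ ℝ and α ≤ β be real numbers. Then ‖∫_α^β e^{i(tμ² + cμ)}·(e^{iμL} + 1)/(e^{iμL} − 3) dμ‖ ≤ 4√2/√t. -/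
open Complex intervalIntegral


-- norm of exp(I*t*u^2) is 1
lemma norm_exp_I_mul (x : ℝ) : ‖Complex.exp (I * x)‖ = 1 := by
  rw [show I * (x:ℂ) = (x:ℂ) * I by ring]
  exact Complex.norm_exp_ofReal_mul_I x

lemma norm_exp_quad (t : ℝ) (u : ℝ) : ‖Complex.exp (I * t * u^2)‖ = 1 := by
  rw [show I * (t:ℂ) * (u:ℂ)^2 = I * ((t*u^2 : ℝ) : ℂ) by push_cast; ring]
  exact norm_exp_I_mul _

lemma cont_exp_quad (t : ℝ) : Continuous (fun u : ℝ => Complex.exp (I * t * u^2)) := by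
  fun_prop

lemma far (t a b : ℝ) (ht : 0 < t) (ha : 0 < a) (hab : a ≤ b) :
    ‖∫ u in a..b, Complex.exp (I * t * u^2)‖ ≤ 1 / (t * a) := by
  have h2it : (2 * I * t : ℂ) ≠ 0 := by
    simp [Complex.ext_iff, ht.ne']
  have hne : ∀ u ∈ Set.uIcc a b, (u:ℝ) ≠ 0 := by
    intro u hu
    rw [Set.uIcc_of_le hab] at hu
    exact (lt_of_lt_of_le ha hu.1).ne'
  set φ : ℝ → ℂ := fun u => (2 * I * t * u)⁻¹ with hφdef
  set φ' : ℝ → ℂ := fun u => -(2 * I * t * u^2)⁻¹ with hφ'def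
  set g : ℝ → ℂ := fun u => Complex.exp (I * t * u^2) with hgdef
  set g' : ℝ → ℂ := fun u => Complex.exp (I * t * u^2) * (2 * I * t * u) with hg'def
  have hφd : ∀ u ∈ Set.uIcc a b, HasDerivAt φ (φ' u) u := by
    intro u hu
    have hu0 : (u:ℂ) ≠ 0 := by exact_mod_cast hne u hu
    have h1 : HasDerivAt (fun z : ℂ => (2 * I * t * z)⁻¹)
        (-(2 * I * t) / (2 * I * t * u)^2) (u:ℂ) := by
      have := ((hasDerivAt_id ((u:ℂ))).const_mul (2 * I * t)).inv
        (mul_ne_zero h2it hu0)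
      simp only [mul_one] at this; exact this
    have h2 := h1.comp_ofReal
    convert h2 using 1
    rw [hφ'def]; field_simp
  have hgd : ∀ u ∈ Set.uIcc a b, HasDerivAt g (g' u) u := by
    intro u _
    have h1 : HasDerivAt (fun z : ℂ => Complex.exp (I * t * z^2))
        (Complex.exp (I * t * u^2) * (I * t * (2 * u))) (u:ℂ) := by
      have hz : HasDerivAt (fun z : ℂ => I * t * z^2) (I * t * (2 * u)) (u:ℂ) := by
        simpa using ((hasDerivAt_pow 2 ((u:ℂ))).const_mul (I * (t:ℂ)))
      simpa using hz.cexp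
    have h2 := h1.comp_ofReal
    convert h2 using 1
    simp [hg'def]; ring
  have hφ'int : IntervalIntegrable φ' MeasureTheory.volume a b := by
    apply ContinuousOn.intervalIntegrable
    apply ContinuousOn.neg
    apply ContinuousOn.inv₀
    · fun_prop
    · intro u hu
      have hu0 : (u:ℂ) ≠ 0 := by exact_mod_cast hne u hu
      exact mul_ne_zero h2it (pow_ne_zero 2 hu0)
  have hg'int : IntervalIntegrable g' MeasureTheory.volume a b := by
    apply Continuous.intervalIntegrable; fun_prop
  have ibp := integral_mul_deriv_eq_deriv_mul hφd hgd hφ'int hg'int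
  -- ∫ φ * g' = φ b * g b - φ a * g a - ∫ φ' * g
  have heq : ∫ u in a..b, Complex.exp (I * t * u^2) = ∫ u in a..b, φ u * g' u := by
    apply integral_congr
    intro u hu
    have hu0 : (u:ℂ) ≠ 0 := by exact_mod_cast hne u hu
    simp only [hφdef, hg'def]
    field_simp; rw [div_self (Complex.ofReal_ne_zero.mpr ht.ne')]
  rw [heq, ibp]
  have hb : 0 < b := lt_of_lt_of_le ha hab
  have hnφ : ∀ u : ℝ, 0 < u → ‖φ u‖ = 1 / (2 * t * u) := by
    intro u hu
    simp only [hφdef]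
    rw [norm_inv]
    rw [show (2 * I * (t:ℂ) * u) = I * ((2*t*u : ℝ):ℂ) by push_cast; ring]
    rw [norm_mul, Complex.norm_I, one_mul, Complex.norm_real]
    rw [Real.norm_of_nonneg (by positivity), one_div]
  have hng : ∀ u : ℝ, ‖g u‖ = 1 := fun u => norm_exp_quad t u
  have hrem : ‖∫ u in a..b, φ' u * g u‖ ≤ 1/(2*t) * (a⁻¹ - b⁻¹) := by
    have hcalc : ∫ u in a..b, (1/(2*t)) * (u:ℝ)⁻¹^2 = 1/(2*t) * (a⁻¹ - b⁻¹) := by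
      rw [integral_const_mul]
      have h0 : (0:ℝ) ∉ Set.uIcc a b := by
        rw [Set.uIcc_of_le hab]
        intro h; exact absurd h.1 (not_le.mpr ha)
      have : ∫ u in a..b, ((u:ℝ))⁻¹^2 = ∫ u in a..b, ((u:ℝ))^(-2 : ℤ) := by
        apply integral_congr; intro u _; simp [zpow_neg]
      rw [this, integral_zpow (Or.inr ⟨by norm_num, h0⟩)]
      have ha0 : a ≠ 0 := ha.ne'
      have hb0 : b ≠ 0 := hb.ne'
      norm_num
      left
      ring
    have hnn : (0:ℝ) ≤ ∫ u in a..b, (1/(2*t)) * (u:ℝ)⁻¹^2 :=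
      integral_nonneg hab (fun u _ => by positivity)
    rw [← hcalc, ← _root_.abs_of_nonneg hnn]
    apply norm_integral_le_abs_of_norm_le _ (by
      apply ContinuousOn.intervalIntegrable
      apply ContinuousOn.mul continuousOn_const
      apply ContinuousOn.pow
      apply ContinuousOn.inv₀ continuousOn_id
      intro u hu; exact hne u hu)
    · apply MeasureTheory.ae_restrict_of_forall_mem measurableSet_uIoc
      intro u hu
      have hu' : u ∈ Set.uIcc a b := Set.uIoc_subset_uIcc hu
      have hupos : 0 < u := lt_of_lt_of_le ha (by rw [Set.uIcc_of_le hab] at hu'; exact hu'.1)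
      rw [norm_mul, hng u, mul_one]
      simp only [hφ'def]
      rw [norm_neg, norm_inv]
      rw [show (2 * I * (t:ℂ) * (u:ℂ)^2) = I * ((2*t*u^2 : ℝ):ℂ) by push_cast; ring]
      rw [norm_mul, Complex.norm_I, one_mul, Complex.norm_real,
        Real.norm_of_nonneg (by positivity)]
      rw [show (2*t*u^2 : ℝ)⁻¹ = 1/(2*t) * (u⁻¹)^2 by field_simp]
  calc ‖φ b * g b - φ a * g a - ∫ u in a..b, φ' u * g u‖
      ≤ ‖φ b * g b - φ a * g a‖ + ‖∫ u in a..b, φ' u * g u‖ := norm_sub_le _ _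
    _ ≤ (‖φ b‖ * ‖g b‖ + ‖φ a‖ * ‖g a‖) + (1/(2*t) * (a⁻¹ - b⁻¹)) := by
        gcongr
        calc ‖φ b * g b - φ a * g a‖ ≤ ‖φ b * g b‖ + ‖φ a * g a‖ := norm_sub_le _ _
          _ = ‖φ b‖ * ‖g b‖ + ‖φ a‖ * ‖g a‖ := by rw [norm_mul, norm_mul]
    _ = 1/(2*t*b) + 1/(2*t*a) + (1/(2*t) * (a⁻¹ - b⁻¹)) := by
        rw [hnφ b hb, hnφ a ha, hng, hng, mul_one, mul_one]
    _ = 1 / (t * a) := by field_simp; ring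


lemma intble (t a b : ℝ) : IntervalIntegrable (fun u : ℝ => Complex.exp (I * t * u^2))
    MeasureTheory.volume a b := by
  apply Continuous.intervalIntegrable; fun_prop

lemma flat (t a b : ℝ) (hab : a ≤ b) :
    ‖∫ u in a..b, Complex.exp (I * t * u^2)‖ ≤ b - a := by
  have := norm_integral_le_of_norm_le_const (C := 1)
    (f := fun u : ℝ => Complex.exp (I * t * u^2)) (a := a) (b := b)
    (fun u _ => le_of_eq (norm_exp_quad t u))
  calc ‖∫ u in a..b, Complex.exp (I * t * u^2)‖ ≤ 1 * |b - a| := this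
    _ = b - a := by rw [one_mul, _root_.abs_of_nonneg (by linarith : (0:ℝ) ≤ b - a)]

lemma half (t A B : ℝ) (ht : 0 < t) (hA : 0 ≤ A) (hAB : A ≤ B) :
    ‖∫ u in A..B, Complex.exp (I * t * u^2)‖ ≤ 2 / Real.sqrt t := by
  have hst : 0 < Real.sqrt t := Real.sqrt_pos.mpr ht
  set r : ℝ := (Real.sqrt t)⁻¹ with hr
  have hrpos : 0 < r := inv_pos.mpr hst
  have hrr : 1 / (t * r) = 1 / Real.sqrt t := by
    rw [hr]
    rw [show t * (Real.sqrt t)⁻¹ = Real.sqrt t by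
      field_simp; rw [Real.sq_sqrt ht.le]]
  rcases le_or_gt B r with hB | hB
  · calc ‖∫ u in A..B, Complex.exp (I * t * u^2)‖ ≤ B - A := flat t A B hAB
      _ ≤ r := by linarith
      _ ≤ 2 / Real.sqrt t := by rw [hr, inv_eq_one_div]; gcongr; norm_num
  · rcases le_or_gt r A with hA' | hA'
    · calc ‖∫ u in A..B, Complex.exp (I * t * u^2)‖ ≤ 1 / (t * A) :=
          far t A B ht (lt_of_lt_of_le hrpos hA') hAB
        _ ≤ 1 / (t * r) := by gcongr
        _ = 1 / Real.sqrt t := hrr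
        _ ≤ 2 / Real.sqrt t := by gcongr; norm_num
    · have hsplit : (∫ u in A..r, Complex.exp (I * t * u^2)) +
          (∫ u in r..B, Complex.exp (I * t * u^2)) =
          ∫ u in A..B, Complex.exp (I * t * u^2) :=
        integral_add_adjacent_intervals (intble t A r) (intble t r B)
      rw [← hsplit]
      calc ‖_ + _‖ ≤ ‖∫ u in A..r, Complex.exp (I * t * u^2)‖ +
            ‖∫ u in r..B, Complex.exp (I * t * u^2)‖ := norm_add_le _ _
        _ ≤ (r - A) + 1 / (t * r) := by
            gcongr
            · exact flat t A r hA'.le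
            · exact far t r B ht hrpos hB.le
        _ ≤ 1 / Real.sqrt t + 1 / Real.sqrt t := by
            rw [hrr]
            gcongr
            rw [hr, inv_eq_one_div]
            linarith
        _ = 2 / Real.sqrt t := by ring
  
lemma full (t A B : ℝ) (ht : 0 < t) (hAB : A ≤ B) :
    ‖∫ u in A..B, Complex.exp (I * t * u^2)‖ ≤ 4 / Real.sqrt t := by
  have key : ∀ A B : ℝ, A ≤ B → B ≤ 0 →
      ‖∫ u in A..B, Complex.exp (I * t * u^2)‖ ≤ 2 / Real.sqrt t := by
    intro A B hAB hB
    have : (∫ u in A..B, Complex.exp (I * t * u^2)) =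
        ∫ u in -B..-A, Complex.exp (I * t * u^2) := by
      rw [show (∫ u in -B..-A, Complex.exp (I * t * u^2)) =
          ∫ u in -B..-A, (fun v : ℝ => Complex.exp (I * t * v^2)) (-u) by
        apply integral_congr; intro u _; norm_num]
      rw [integral_comp_neg (fun v : ℝ => Complex.exp (I * t * v^2))]
      norm_num
    rw [this]
    exact half t (-B) (-A) ht (by linarith) (by linarith)
  rcases le_or_gt 0 A with hA | hA
  · calc ‖_‖ ≤ 2 / Real.sqrt t := half t A B ht hA hAB
      _ ≤ 4 / Real.sqrt t := by gcongr <;> norm_num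
  · rcases le_or_gt B 0 with hB | hB
    · calc ‖_‖ ≤ 2 / Real.sqrt t := key A B hAB hB
        _ ≤ 4 / Real.sqrt t := by gcongr <;> norm_num
    · have hsplit : (∫ u in A..0, Complex.exp (I * t * u^2)) +
          (∫ u in (0:ℝ)..B, Complex.exp (I * t * u^2)) =
          ∫ u in A..B, Complex.exp (I * t * u^2) :=
        integral_add_adjacent_intervals (intble t A 0) (intble t 0 B)
      rw [← hsplit]
      calc ‖_ + _‖ ≤ ‖∫ u in A..(0:ℝ), Complex.exp (I * t * u^2)‖ +
            ‖∫ u in (0:ℝ)..B, Complex.exp (I * t * u^2)‖ := norm_add_le _ _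
        _ ≤ 2 / Real.sqrt t + 2 / Real.sqrt t := by
            gcongr
            · exact key A 0 hA.le le_rfl
            · exact half t 0 B ht le_rfl hB.le
        _ = 4 / Real.sqrt t := by ring


lemma linphase (t a α β : ℝ) (ht : 0 < t) (hαβ : α ≤ β) :
    ‖∫ μ in α..β, Complex.exp (I * (t * μ^2 + a * μ))‖ ≤ 4 / Real.sqrt t := by
  set s : ℝ := a / (2 * t) with hs
  have ht' : (t:ℂ) ≠ 0 := by exact_mod_cast ht.ne'
  have hfac : ∀ μ : ℝ, Complex.exp (I * (t * μ^2 + a * μ)) =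
      Complex.exp (I * t * ((μ:ℝ) + s : ℝ)^2) * Complex.exp (-(I * (a^2 / (4*t)))) := by
    intro μ
    rw [← Complex.exp_add]
    congr 1
    push_cast [hs]
    field_simp
    ring
  have : (∫ μ in α..β, Complex.exp (I * (t * μ^2 + a * μ))) =
      (∫ μ in α..β, Complex.exp (I * t * ((μ:ℝ) + s : ℝ)^2)) *
        Complex.exp (-(I * (a^2 / (4*t)))) := by
    rw [← integral_mul_const]
    apply integral_congr
    intro μ _
    exact hfac μ
  rw [this, norm_mul]
  have hK : ‖Complex.exp (-(I * ((a:ℝ)^2 / (4*t))))‖ = 1 := by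
    rw [show -(I * ((a:ℝ)^2 / (4*t) : ℂ)) = ((-(a^2/(4*t)) : ℝ) : ℂ) * I by push_cast; ring]
    exact Complex.norm_exp_ofReal_mul_I _
  rw [hK, mul_one]
  have hcomp : (∫ μ in α..β, Complex.exp (I * t * ((μ:ℝ) + s : ℝ)^2)) =
      ∫ u in (α+s)..(β+s), Complex.exp (I * t * u^2) := by
    rw [← integral_comp_add_right (fun u : ℝ => Complex.exp (I * t * (u:ℝ)^2)) s]
  rw [hcomp]
  exact full t (α+s) (β+s) ht (by linarith)


lemma geom_id (z : ℂ) (hz : z - 3 ≠ 0) (N : ℕ) :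
    (z+1)/(z-3) = -(∑ n ∈ Finset.range N, (z^(n+1)+z^n)/3^(n+1)) + (z/3)^N * ((z+1)/(z-3)) := by
  induction N with
  | zero => simp
  | succ N ih =>
    have hQ : ((z:ℂ)/3)^N * ((z+1)/(z-3)) =
        (z/3)^(N+1) * ((z+1)/(z-3)) - (z^(N+1)+z^N)/3^(N+1) := by
      rw [div_pow, div_pow]
      field_simp
      ring
    rw [Finset.sum_range_succ]
    linear_combination ih + hQ

theorem stmt_13 (t : ℝ) (ht : 0 < t) (c L : ℝ) (α β : ℝ) (hαβ : α ≤ β) :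
    ‖∫ μ in α..β,
        Complex.exp (I * (t * μ ^ 2 + c * μ))
          * (Complex.exp (I * μ * L) + 1) / (Complex.exp (I * μ * L) - 3)‖
      ≤ 4 * Real.sqrt 2 / Real.sqrt t := by
  have hst : 0 < Real.sqrt t := Real.sqrt_pos.mpr ht
  set E : ℝ → ℂ := fun μ => Complex.exp (I * μ * L) with hE
  set P : ℝ → ℂ := fun μ => Complex.exp (I * (t * μ ^ 2 + c * μ)) with hP
  have hEnorm : ∀ μ, ‖E μ‖ = 1 := by
    intro μ
    show ‖Complex.exp (I * (μ:ℂ) * L)‖ = 1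
    rw [show I * (μ:ℂ) * L = ((μ*L : ℝ):ℂ) * I by push_cast; ring]
    exact Complex.norm_exp_ofReal_mul_I _
  have hPnorm : ∀ μ, ‖P μ‖ = 1 := by
    intro μ
    show ‖Complex.exp (I * ((t:ℂ) * μ^2 + c*μ))‖ = 1
    rw [show I * ((t:ℂ) * μ^2 + c*μ) = ((t*μ^2 + c*μ : ℝ):ℂ) * I by push_cast; ring]
    exact Complex.norm_exp_ofReal_mul_I _
  have hEden : ∀ μ, (2:ℝ) ≤ ‖E μ - 3‖ := by
    intro μ
    calc (2:ℝ) = ‖(3:ℂ)‖ - ‖E μ‖ := by rw [hEnorm μ]; norm_num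
      _ ≤ ‖(3:ℂ) - E μ‖ := norm_sub_norm_le _ _
      _ = ‖E μ - 3‖ := norm_sub_rev _ _
  have hEne : ∀ μ, E μ - 3 ≠ 0 := by
    intro μ h
    have := hEden μ
    rw [h, norm_zero] at this
    linarith
  have hEcont : Continuous E := by rw [hE]; fun_prop
  have hPcont : Continuous P := by rw [hP]; fun_prop
  have hdencont : Continuous fun μ => (E μ - 3)⁻¹ :=
    (hEcont.sub continuous_const).inv₀ hEne
  have hPE : ∀ k : ℕ, IntervalIntegrable (fun μ => P μ * (E μ)^k)
      MeasureTheory.volume α β :=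
    fun k => (hPcont.mul (hEcont.pow k)).intervalIntegrable _ _
  have hexpk : ∀ (k : ℕ) (μ : ℝ), P μ * (E μ)^k =
      Complex.exp (I * (t * μ^2 + ((c + (k:ℝ)*L : ℝ) : ℂ) * μ)) := by
    intro k μ
    show Complex.exp (I * ((t:ℂ) * μ^2 + c*μ)) * (Complex.exp (I * (μ:ℂ) * L))^k = _
    rw [← Complex.exp_nat_mul, ← Complex.exp_add]
    congr 1
    push_cast
    ring
  have hterm : ∀ k : ℕ, ‖∫ μ in α..β, P μ * (E μ)^k‖ ≤ 4 / Real.sqrt t := by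
    intro k
    have heq : (∫ μ in α..β, P μ * (E μ)^k) =
        ∫ μ in α..β, Complex.exp (I * (t * μ^2 + ((c + (k:ℝ)*L : ℝ) : ℂ) * μ)) :=
      integral_congr (fun μ _ => hexpk k μ)
    rw [heq]
    exact linphase t (c + (k:ℝ)*L) α β ht hαβ
  have key : ∀ N : ℕ, ‖∫ μ in α..β, P μ * (E μ + 1) / (E μ - 3)‖ ≤
      4 / Real.sqrt t + (β - α) * (1/3)^N := by
    intro N
    have hdecomp : ∀ μ, P μ * (E μ + 1) / (E μ - 3) =
        (∑ n ∈ Finset.range N, -(P μ * ((E μ)^(n+1) + (E μ)^n) / 3^(n+1))) +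
          P μ * (E μ / 3)^N * ((E μ + 1) / (E μ - 3)) := by
      intro μ
      conv_lhs => rw [mul_div_assoc, geom_id (E μ) (hEne μ) N]
      rw [mul_add, ← mul_assoc]
      congr 1
      rw [mul_neg, Finset.mul_sum, ← Finset.sum_neg_distrib]
      exact Finset.sum_congr rfl (fun n _ => by rw [mul_div_assoc])
    have hgint : ∀ n : ℕ, IntervalIntegrable
        (fun μ => -(P μ * ((E μ)^(n+1) + (E μ)^n) / 3^(n+1)))
        MeasureTheory.volume α β := by
      intro n
      apply Continuous.intervalIntegrable
      exact ((hPcont.mul ((hEcont.pow (n+1)).add (hEcont.pow n))).div_const _).neg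
    have hRcont : Continuous (fun μ => P μ * (E μ / 3)^N * ((E μ + 1) / (E μ - 3))) := by
      apply Continuous.mul
      · exact hPcont.mul ((hEcont.div_const _).pow N)
      · exact ((hEcont.add continuous_const).mul hdencont).congr
          (fun x => (div_eq_mul_inv _ _).symm)
    have hRint : IntervalIntegrable
        (fun μ => P μ * (E μ / 3)^N * ((E μ + 1) / (E μ - 3)))
        MeasureTheory.volume α β := hRcont.intervalIntegrable _ _
    have hsplit : (∫ μ in α..β, P μ * (E μ + 1) / (E μ - 3)) =
        (∑ n ∈ Finset.range N, ∫ μ in α..β, -(P μ * ((E μ)^(n+1) + (E μ)^n) / 3^(n+1))) +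
          ∫ μ in α..β, P μ * (E μ / 3)^N * ((E μ + 1) / (E μ - 3)) := by
      have hScont : Continuous (fun μ => ∑ n ∈ Finset.range N,
          -(P μ * ((E μ)^(n+1) + (E μ)^n) / 3^(n+1))) := by
        apply continuous_finset_sum
        intro n _
        exact ((hPcont.mul ((hEcont.pow (n+1)).add (hEcont.pow n))).div_const _).neg
      calc (∫ μ in α..β, P μ * (E μ + 1) / (E μ - 3))
          = ∫ μ in α..β, ((∑ n ∈ Finset.range N,
              -(P μ * ((E μ)^(n+1) + (E μ)^n) / 3^(n+1))) +
              P μ * (E μ / 3)^N * ((E μ + 1) / (E μ - 3))) :=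
            integral_congr (fun μ _ => hdecomp μ)
        _ = (∫ μ in α..β, ∑ n ∈ Finset.range N,
              -(P μ * ((E μ)^(n+1) + (E μ)^n) / 3^(n+1))) +
            ∫ μ in α..β, P μ * (E μ / 3)^N * ((E μ + 1) / (E μ - 3)) :=
            integral_add (hScont.intervalIntegrable _ _) hRint
        _ = (∑ n ∈ Finset.range N, ∫ μ in α..β,
              -(P μ * ((E μ)^(n+1) + (E μ)^n) / 3^(n+1))) +
            ∫ μ in α..β, P μ * (E μ / 3)^N * ((E μ + 1) / (E μ - 3)) := by
            rw [integral_finset_sum (fun n _ => hgint n)]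
    rw [hsplit]
    have hbound_n : ∀ n : ℕ, ‖∫ μ in α..β, -(P μ * ((E μ)^(n+1) + (E μ)^n) / 3^(n+1))‖ ≤
        (1/3)^(n+1) * (8 / Real.sqrt t) := by
      intro n
      rw [integral_neg, norm_neg]
      have h1 : (∫ μ in α..β, P μ * ((E μ)^(n+1) + (E μ)^n) / 3^(n+1)) =
          ((∫ μ in α..β, P μ * (E μ)^(n+1)) + ∫ μ in α..β, P μ * (E μ)^n) / 3^(n+1) := by
        rw [← integral_add (hPE (n+1)) (hPE n), ← integral_div]
        exact integral_congr (fun μ _ => by rw [mul_add, add_div])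
      rw [h1, norm_div]
      have h3 : ‖(3:ℂ)^(n+1)‖ = 3^(n+1) := by
        rw [norm_pow]
        norm_num
      rw [h3, div_le_iff₀ (by positivity)]
      calc ‖(∫ μ in α..β, P μ * (E μ)^(n+1)) + ∫ μ in α..β, P μ * (E μ)^n‖
          ≤ ‖∫ μ in α..β, P μ * (E μ)^(n+1)‖ + ‖∫ μ in α..β, P μ * (E μ)^n‖ :=
            norm_add_le _ _
        _ ≤ 4 / Real.sqrt t + 4 / Real.sqrt t := add_le_add (hterm _) (hterm _)
        _ = 8 / Real.sqrt t := by ring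
        _ = (1/3)^(n+1) * (8 / Real.sqrt t) * 3^(n+1) := by
            rw [div_pow, one_pow]
            field_simp
    have hbound_R : ‖∫ μ in α..β, P μ * (E μ / 3)^N * ((E μ + 1) / (E μ - 3))‖ ≤
        (β - α) * (1/3)^N := by
      have hb := norm_integral_le_of_norm_le_const (C := (1/3)^N)
        (f := fun μ => P μ * (E μ / 3)^N * ((E μ + 1) / (E μ - 3))) (a := α) (b := β)
        (fun μ _ => by
          rw [norm_mul, norm_mul, hPnorm, one_mul, norm_pow, norm_div, hEnorm, norm_div]
          have h3 : ‖(3:ℂ)‖ = 3 := by norm_num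
          rw [h3]
          have hle1 : ‖E μ + 1‖ / ‖E μ - 3‖ ≤ 1 := by
            rw [div_le_one (by linarith [hEden μ])]
            calc ‖E μ + 1‖ ≤ ‖E μ‖ + ‖(1:ℂ)‖ := norm_add_le _ _
              _ = 2 := by rw [hEnorm]; norm_num
              _ ≤ ‖E μ - 3‖ := hEden μ
          calc (1/3 : ℝ)^N * (‖E μ + 1‖ / ‖E μ - 3‖) ≤ (1/3:ℝ)^N * 1 := by
                gcongr
            _ = (1/3:ℝ)^N := mul_one _)
      calc ‖∫ μ in α..β, P μ * (E μ / 3)^N * ((E μ + 1) / (E μ - 3))‖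
          ≤ (1/3:ℝ)^N * |β - α| := hb
        _ = (β - α) * (1/3)^N := by
            rw [_root_.abs_of_nonneg (by linarith : (0:ℝ) ≤ β - α)]
            ring
    have hgeom : (∑ n ∈ Finset.range N, (1/3:ℝ)^(n+1) * (8 / Real.sqrt t)) ≤
        4 / Real.sqrt t := by
      have hs : (∑ n ∈ Finset.range N, (1/3:ℝ)^(n+1)) ≤ 1/2 := by
        have he : (∑ n ∈ Finset.range N, (1/3:ℝ)^(n+1)) =
            (1/3) * ∑ n ∈ Finset.range N, (1/3:ℝ)^n := by
          rw [Finset.mul_sum]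
          exact Finset.sum_congr rfl (fun n _ => by rw [pow_succ]; ring)
        rw [he, geom_sum_eq (by norm_num)]
        have h1 : (0:ℝ) ≤ (1/3:ℝ)^N := by positivity
        have h2 : ((1/3:ℝ)^N - 1)/(1/3 - 1) = (1 - (1/3:ℝ)^N) * (3/2) := by ring
        rw [h2]
        nlinarith
      calc (∑ n ∈ Finset.range N, (1/3:ℝ)^(n+1) * (8 / Real.sqrt t))
          = (∑ n ∈ Finset.range N, (1/3:ℝ)^(n+1)) * (8 / Real.sqrt t) := by
            rw [Finset.sum_mul]
        _ ≤ (1/2) * (8 / Real.sqrt t) := by gcongr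
        _ = 4 / Real.sqrt t := by ring
    calc ‖(∑ n ∈ Finset.range N, ∫ μ in α..β,
            -(P μ * ((E μ)^(n+1) + (E μ)^n) / 3^(n+1))) +
          ∫ μ in α..β, P μ * (E μ / 3)^N * ((E μ + 1) / (E μ - 3))‖
        ≤ ‖∑ n ∈ Finset.range N, ∫ μ in α..β,
            -(P μ * ((E μ)^(n+1) + (E μ)^n) / 3^(n+1))‖ +
          ‖∫ μ in α..β, P μ * (E μ / 3)^N * ((E μ + 1) / (E μ - 3))‖ := norm_add_le _ _
      _ ≤ (∑ n ∈ Finset.range N, (1/3:ℝ)^(n+1) * (8 / Real.sqrt t)) +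
          (β - α) * (1/3)^N := by
          apply add_le_add _ hbound_R
          calc ‖∑ n ∈ Finset.range N, ∫ μ in α..β,
                -(P μ * ((E μ)^(n+1) + (E μ)^n) / 3^(n+1))‖
                ≤ ∑ n ∈ Finset.range N, ‖∫ μ in α..β,
                  -(P μ * ((E μ)^(n+1) + (E μ)^n) / 3^(n+1))‖ := norm_sum_le _ _
            _ ≤ ∑ n ∈ Finset.range N, (1/3:ℝ)^(n+1) * (8 / Real.sqrt t) :=
                  Finset.sum_le_sum (fun n _ => hbound_n n)
      _ ≤ 4 / Real.sqrt t + (β - α) * (1/3)^N := add_le_add hgeom le_rfl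
  have hlim : Filter.Tendsto (fun N : ℕ => 4 / Real.sqrt t + (β - α) * (1/3:ℝ)^N)
      Filter.atTop (nhds (4 / Real.sqrt t)) := by
    have h0 : Filter.Tendsto (fun N : ℕ => (β - α) * (1/3:ℝ)^N) Filter.atTop (nhds 0) := by
      rw [show (0:ℝ) = (β - α) * 0 by ring]
      exact (tendsto_pow_atTop_nhds_zero_of_lt_one (by norm_num) (by norm_num)).const_mul _
    simpa using Filter.Tendsto.const_add (4 / Real.sqrt t) h0
  have hfinal : ‖∫ μ in α..β, P μ * (E μ + 1) / (E μ - 3)‖ ≤ 4 / Real.sqrt t :=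
    ge_of_tendsto' hlim key
  have hsqrt2 : (4 : ℝ) / Real.sqrt t ≤ 4 * Real.sqrt 2 / Real.sqrt t := by
    gcongr
    nlinarith [Real.sq_sqrt (by norm_num : (0:ℝ) ≤ 2), Real.sqrt_nonneg 2]
  exact hfinal.trans hsqrt2
end

section
/- Let t > 0, let L, d, s ∈ ℝ and let α ≤ β be real numbers. Then ‖∫_α^β e^{itμ²}·(e^{iμd} − (1 + 2(e^{iμL}+1)/(e^{iμL}−3))·e^{iμs}) dμ‖ ≤ 16√2/√t. -/
open Complex intervalIntegral MeasureTheory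

lemma norm_exp_It' (t μ : ℝ) : ‖Complex.exp (I*t*μ^2)‖ = 1 := by
  have : (I*t*μ^2 : ℂ) = ((t*μ^2 : ℝ) : ℂ) * I := by push_cast; ring
  rw [this]; exact Complex.norm_exp_ofReal_mul_I _

lemma fresnel (t : ℝ) (ht : 0 < t) (x : ℝ) (hx : 0 ≤ x) :
    ‖∫ ν in (0:ℝ)..x, Complex.exp (I*t*ν^2)‖ ≤ 2 / Real.sqrt t := by
  have hst : 0 < Real.sqrt t := Real.sqrt_pos.2 ht
  set δ : ℝ := (Real.sqrt t)⁻¹ with hδdef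
  have hδ : 0 < δ := inv_pos.2 hst
  have h2 : 2 / Real.sqrt t = 2 * δ := by rw [hδdef]; ring
  have htδ : (t * δ)⁻¹ = δ := by
    rw [hδdef, mul_inv, inv_inv]
    nth_rewrite 1 [← Real.sqrt_mul_self ht.le]
    field_simp
    rw [Real.sq_sqrt ht.le, Real.sqrt_sq ht.le]
  have hcont : Continuous fun ν : ℝ => Complex.exp (I*t*ν^2) := by fun_prop
  have hsmall : ∀ a b : ℝ, ‖∫ ν in a..b, Complex.exp (I*t*ν^2)‖ ≤ |b - a| := by
    intro a b
    have := intervalIntegral.norm_integral_le_of_norm_le_const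
      (f := fun ν : ℝ => Complex.exp (I*t*ν^2)) (a := a) (b := b) (C := 1)
      (fun ν _ => le_of_eq (norm_exp_It' t ν))
    simpa using this
  by_cases hxδ : x ≤ δ
  · calc ‖∫ ν in (0:ℝ)..x, Complex.exp (I*t*ν^2)‖ ≤ |x - 0| := hsmall 0 x
    _ = x := by rw [sub_zero, _root_.abs_of_nonneg hx]
    _ ≤ 2 * δ := by linarith
    _ = 2 / Real.sqrt t := h2.symm
  · push_neg at hxδ
    have hδx : δ ≤ x := hxδ.le
    have hInt : ∀ a b : ℝ, IntervalIntegrable (fun ν : ℝ => Complex.exp (I*t*ν^2)) volume a b :=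
      fun a b => hcont.intervalIntegrable a b
    have hsplit : (∫ ν in (0:ℝ)..x, Complex.exp (I*t*ν^2))
        = (∫ ν in (0:ℝ)..δ, Complex.exp (I*t*ν^2)) + ∫ ν in δ..x, Complex.exp (I*t*ν^2) :=
      (intervalIntegral.integral_add_adjacent_intervals (hInt 0 δ) (hInt δ x)).symm
    have huIcc : Set.uIcc δ x = Set.Icc δ x := Set.uIcc_of_le hδx
    have hpos : ∀ ν ∈ Set.uIcc δ x, 0 < ν := by
      intro ν hν
      rw [huIcc] at hν
      linarith [hν.1]
    set c : ℂ := 2*I*t with hc_def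
    have hc0 : c ≠ 0 :=
      mul_ne_zero (mul_ne_zero two_ne_zero I_ne_zero) (Complex.ofReal_ne_zero.2 ht.ne')
    set u : ℝ → ℂ := fun ν => c⁻¹ * (ν:ℂ)⁻¹ with hu_def
    set u' : ℝ → ℂ := fun ν => c⁻¹ * (-((ν:ℂ)^2)⁻¹) with hu'_def
    set v : ℝ → ℂ := fun ν => Complex.exp (I*t*ν^2) with hv_def
    set v' : ℝ → ℂ := fun ν => (c*ν) * Complex.exp (I*t*ν^2) with hv'_def
    have hu : ∀ ν ∈ Set.uIcc δ x, HasDerivAt u (u' ν) ν := by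
      intro ν hν
      have hν0 : (ν:ℂ) ≠ 0 := by exact_mod_cast (hpos ν hν).ne'
      exact ((hasDerivAt_inv hν0).const_mul c⁻¹).comp_ofReal
    have hv : ∀ ν ∈ Set.uIcc δ x, HasDerivAt v (v' ν) ν := by
      intro ν _
      have h1 : HasDerivAt (fun y : ℂ => I*t*y^2) (I*t*(2*ν)) (ν:ℂ) := by
        simpa using ((hasDerivAt_pow 2 (ν:ℂ)).const_mul (I*(t:ℂ)))
      have h2 := (h1.comp_ofReal).cexp
      convert h2 using 1
      rw [hv'_def, hc_def]; ring
    have hsqne : ∀ ν ∈ Set.uIcc δ x, ((ν:ℂ))^2 ≠ 0 := by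
      intro ν hν
      have hν0 : (ν:ℂ) ≠ 0 := by exact_mod_cast (hpos ν hν).ne'
      exact pow_ne_zero _ hν0
    have hu'cont : ContinuousOn u' (Set.uIcc δ x) := by
      have h1 : ContinuousOn (fun ν : ℝ => (((ν:ℂ))^2)⁻¹) (Set.uIcc δ x) :=
        ContinuousOn.inv₀ (by fun_prop) hsqne
      exact continuousOn_const.mul h1.neg
    have hu'int : IntervalIntegrable u' volume δ x := hu'cont.intervalIntegrable
    have hv'int : IntervalIntegrable v' volume δ x := by
      apply Continuous.intervalIntegrable; fun_prop
    have hibp := intervalIntegral.integral_mul_deriv_eq_deriv_mul hu hv hu'int hv'int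
    have hcong : (∫ ν in δ..x, v ν) = ∫ ν in δ..x, u ν * v' ν := by
      apply intervalIntegral.integral_congr
      intro ν hν
      have hν0 : (ν:ℂ) ≠ 0 := by exact_mod_cast (hpos ν hν).ne'
      simp only [hu_def, hv'_def, hv_def]
      field_simp
    -- norm computations
    have hnormc : ‖c‖ = 2*t := by
      rw [hc_def]
      simp [norm_mul, Complex.norm_real, abs_of_pos ht]
    have hnu : ∀ ν : ℝ, 0 < ν → ‖u ν‖ = (2*t*ν)⁻¹ := by
      intro ν hν
      rw [hu_def]
      simp only [norm_mul, norm_inv, hnormc, Complex.norm_real]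
      rw [Real.norm_eq_abs, abs_of_pos hν]
      ring
    have hnuv : ∀ ν : ℝ, 0 < ν → ‖u ν * v ν‖ = (2*t*ν)⁻¹ := by
      intro ν hν
      rw [norm_mul, hnu ν hν, hv_def, norm_exp_It' t ν, mul_one]
    -- bound the remainder integral
    have hrem : ‖∫ ν in δ..x, u' ν * v ν‖ ≤ (2*t)⁻¹ * δ⁻¹ - (2*t)⁻¹ * x⁻¹ := by
      have hval : (∫ ν in δ..x, (2*t)⁻¹ * (ν^2)⁻¹)
          = (-(2*t)⁻¹ * x⁻¹) - (-(2*t)⁻¹ * δ⁻¹) := by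
        apply intervalIntegral.integral_eq_sub_of_hasDerivAt
        · intro ν hν
          have hν0 : ν ≠ 0 := (hpos ν hν).ne'
          have := ((hasDerivAt_inv hν0).const_mul (-(2*t)⁻¹))
          convert this using 1
          · rfl
          ring
        · apply ContinuousOn.intervalIntegrable
          apply ContinuousOn.mul continuousOn_const
          apply ContinuousOn.inv₀
          · fun_prop
          · intro ν hν
            have := (hpos ν hν).ne'
            positivity
      have hxinv : (2*t)⁻¹ * x⁻¹ ≤ (2*t)⁻¹ * δ⁻¹ := by
        have hx0 : 0 < x := lt_trans hδ hxδ
        have : x⁻¹ ≤ δ⁻¹ := by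
          apply inv_anti₀ hδ hδx
        have h2t : (0:ℝ) < (2*t)⁻¹ := by positivity
        nlinarith
      have hle : ‖∫ ν in δ..x, u' ν * v ν‖ ≤ |∫ ν in δ..x, (2*t)⁻¹ * (ν^2)⁻¹| := by
        refine intervalIntegral.norm_integral_le_abs_of_norm_le ?_ ?_
        swap
        · apply ContinuousOn.intervalIntegrable
          apply ContinuousOn.mul continuousOn_const
          apply ContinuousOn.inv₀ (by fun_prop)
          intro ν hν
          have := (hpos ν hν).ne'
          positivity
        filter_upwards [MeasureTheory.ae_restrict_mem measurableSet_uIoc] with ν hν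
        rw [Set.uIoc_of_le hδx] at hν
        have hν0 : 0 < ν := lt_trans hδ hν.1
        rw [norm_mul, hu'_def, hv_def]
        simp only
        rw [norm_exp_It' t ν, mul_one, norm_mul, norm_inv, hnormc, norm_neg, norm_inv]
        have : ‖((ν:ℂ))^2‖ = ν^2 := by
          rw [norm_pow, Complex.norm_real, Real.norm_eq_abs, abs_of_pos hν0]
        rw [this, mul_inv]
      calc ‖∫ ν in δ..x, u' ν * v ν‖ ≤ |∫ ν in δ..x, (2*t)⁻¹ * (ν^2)⁻¹| := hle
        _ = |(-(2*t)⁻¹ * x⁻¹) - (-(2*t)⁻¹ * δ⁻¹)| := by rw [hval]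
        _ = (2*t)⁻¹ * δ⁻¹ - (2*t)⁻¹ * x⁻¹ := by
            rw [_root_.abs_of_nonneg (by linarith)]; ring
    -- assemble
    have hpart2 : ‖∫ ν in δ..x, v ν‖ ≤ δ := by
      rw [hcong, hibp]
      have h1 : ‖u x * v x - u δ * v δ - ∫ ν in δ..x, u' ν * v ν‖
          ≤ ‖u x * v x‖ + ‖u δ * v δ‖ + ‖∫ ν in δ..x, u' ν * v ν‖ := by
        calc ‖u x * v x - u δ * v δ - ∫ ν in δ..x, u' ν * v ν‖
            ≤ ‖u x * v x - u δ * v δ‖ + ‖∫ ν in δ..x, u' ν * v ν‖ := norm_sub_le _ _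
          _ ≤ ‖u x * v x‖ + ‖u δ * v δ‖ + ‖∫ ν in δ..x, u' ν * v ν‖ := by
              have := norm_sub_le (u x * v x) (u δ * v δ)
              linarith
      have hx0 : 0 < x := lt_trans hδ hxδ
      rw [hnuv x hx0, hnuv δ hδ] at h1
      have : ‖u x * v x - u δ * v δ - ∫ ν in δ..x, u' ν * v ν‖
          ≤ (2*t*x)⁻¹ + (2*t*δ)⁻¹ + ((2*t)⁻¹ * δ⁻¹ - (2*t)⁻¹ * x⁻¹) := by
        linarith [hrem]
      have heq : (2*t*x)⁻¹ + (2*t*δ)⁻¹ + ((2*t)⁻¹ * δ⁻¹ - (2*t)⁻¹ * x⁻¹) = (t*δ)⁻¹ := by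
        have hx0' : x ≠ 0 := hx0.ne'
        have hδ0' : δ ≠ 0 := hδ.ne'
        field_simp
        ring
      rw [heq, htδ] at this
      exact this
    have hpart1 : ‖∫ ν in (0:ℝ)..δ, Complex.exp (I*t*ν^2)‖ ≤ δ := by
      have := hsmall 0 δ
      rw [sub_zero, _root_.abs_of_pos hδ] at this
      exact this
    rw [hsplit, h2]
    calc ‖(∫ ν in (0:ℝ)..δ, Complex.exp (I*t*ν^2)) + ∫ ν in δ..x, Complex.exp (I*t*ν^2)‖
        ≤ ‖∫ ν in (0:ℝ)..δ, Complex.exp (I*t*ν^2)‖ + ‖∫ ν in δ..x, Complex.exp (I*t*ν^2)‖ :=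
          norm_add_le _ _
      _ ≤ δ + δ := add_le_add hpart1 hpart2
      _ = 2 * δ := by ring

lemma fresnel_signed (t : ℝ) (ht : 0 < t) (x : ℝ) :
    ‖∫ ν in (0:ℝ)..x, Complex.exp (I*t*ν^2)‖ ≤ 2 / Real.sqrt t := by
  rcases le_or_gt 0 x with hx | hx
  · exact fresnel t ht x hx
  · have heven : (∫ ν in (0:ℝ)..x, Complex.exp (I*t*ν^2))
        = ∫ ν in (0:ℝ)..x, Complex.exp (I*t*(-ν:ℝ)^2) := by
      apply intervalIntegral.integral_congr
      intro ν _
      norm_num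
    rw [heven, intervalIntegral.integral_comp_neg (fun ν : ℝ => Complex.exp (I*t*ν^2)),
      neg_zero]
    rw [intervalIntegral.integral_symm 0 (-x), norm_neg]
    exact fresnel t ht (-x) (by linarith)

lemma fresnel_all (t : ℝ) (ht : 0 < t) (a b : ℝ) :
    ‖∫ ν in a..b, Complex.exp (I*t*ν^2)‖ ≤ 4 / Real.sqrt t := by
  have hcont : Continuous fun ν : ℝ => Complex.exp (I*t*ν^2) := by fun_prop
  have hadd := intervalIntegral.integral_add_adjacent_intervals (μ := MeasureTheory.volume)
    (hcont.intervalIntegrable 0 a) (hcont.intervalIntegrable a b)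
  have : (∫ ν in a..b, Complex.exp (I*t*ν^2))
      = (∫ ν in (0:ℝ)..b, Complex.exp (I*t*ν^2)) - ∫ ν in (0:ℝ)..a, Complex.exp (I*t*ν^2) := by
    rw [← hadd]; ring
  rw [this]
  calc ‖(∫ ν in (0:ℝ)..b, Complex.exp (I*t*ν^2)) - ∫ ν in (0:ℝ)..a, Complex.exp (I*t*ν^2)‖
      ≤ ‖∫ ν in (0:ℝ)..b, Complex.exp (I*t*ν^2)‖ + ‖∫ ν in (0:ℝ)..a, Complex.exp (I*t*ν^2)‖ :=
        norm_sub_le _ _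
    _ ≤ 2 / Real.sqrt t + 2 / Real.sqrt t :=
        add_le_add (fresnel_signed t ht b) (fresnel_signed t ht a)
    _ = 4 / Real.sqrt t := by ring

lemma expquad (t : ℝ) (ht : 0 < t) (c α β : ℝ) :
    ‖∫ μ in α..β, Complex.exp (I*t*μ^2 + I*μ*c)‖ ≤ 4 / Real.sqrt t := by
  have ht0 : (t:ℂ) ≠ 0 := Complex.ofReal_ne_zero.2 ht.ne'
  have key : ∀ μ : ℝ, Complex.exp (I*t*μ^2 + I*μ*c)
      = Complex.exp (-(I*((c^2/(4*t) : ℝ) : ℂ)))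
        * Complex.exp (I*t*(((μ + c/(2*t) : ℝ)) : ℂ)^2) := by
    intro μ
    rw [← Complex.exp_add]
    congr 1
    push_cast
    field_simp
    ring
  simp_rw [key]
  rw [intervalIntegral.integral_const_mul]
  rw [norm_mul]
  have h1 : ‖Complex.exp (-(I*((c^2/(4*t) : ℝ) : ℂ)))‖ = 1 := by
    rw [show (-(I*((c^2/(4*t) : ℝ) : ℂ))) = ((-(c^2/(4*t)) : ℝ) : ℂ) * I by push_cast; ring]
    exact Complex.norm_exp_ofReal_mul_I _
  rw [h1, one_mul]
  rw [show (fun μ : ℝ => Complex.exp (I*t*(((μ + c/(2*t) : ℝ)) : ℂ)^2))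
      = fun μ : ℝ => (fun ν : ℝ => Complex.exp (I*t*(ν:ℂ)^2)) (μ + c/(2*t)) from rfl]
  rw [intervalIntegral.integral_comp_add_right (fun ν : ℝ => Complex.exp (I*t*(ν:ℂ)^2))]
  exact fresnel_all t ht _ _

lemma norm_exp_It (t c μ : ℝ) : ‖Complex.exp (I*t*μ^2 + I*μ*c)‖ = 1 := by
  have : (I*t*μ^2 + I*μ*c : ℂ) = ((t*μ^2 + μ*c : ℝ) : ℂ) * I := by push_cast; ring
  rw [this]; exact Complex.norm_exp_ofReal_mul_I _

theorem stmt_14 (t : ℝ) (ht : 0 < t) (L d s : ℝ) (α β : ℝ) (hαβ : α ≤ β) :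
    ‖∫ μ in α..β,
        Complex.exp (I * t * μ ^ 2)
          * (Complex.exp (I * μ * d)
              - (1 + 2 * (Complex.exp (I * μ * L) + 1) / (Complex.exp (I * μ * L) - 3))
                * Complex.exp (I * μ * s))‖
      ≤ 16 * Real.sqrt 2 / Real.sqrt t := by
  have hst : 0 < Real.sqrt t := Real.sqrt_pos.2 ht
  set B : ℝ := 4 / Real.sqrt t with hB_def
  have hB : 0 ≤ B := by positivity
  set E : ℝ → ℝ → ℂ := fun c μ => Complex.exp (I*t*μ^2 + I*μ*c) with hE_def
  set f : ℝ → ℂ := fun μ =>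
    Complex.exp (I * t * μ ^ 2)
      * (Complex.exp (I * μ * d)
          - (1 + 2 * (Complex.exp (I * μ * L) + 1) / (Complex.exp (I * μ * L) - 3))
            * Complex.exp (I * μ * s)) with hf_def
  set G : ℕ → ℝ → ℂ := fun n μ =>
    match n with
    | 0 => E d μ
    | 1 => -(E s μ)
    | (n+2) => (2/3^(n+1) : ℂ) * (E (s+(n+1)*L) μ + E (s+n*L) μ) with hG_def
  have hEcont : ∀ c, Continuous (E c) := by
    intro c; rw [hE_def]; fun_prop
  have hEint : ∀ c, IntervalIntegrable (E c) MeasureTheory.volume α β :=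
    fun c => (hEcont c).intervalIntegrable α β
  have hEbound : ∀ c, ‖∫ μ in α..β, E c μ‖ ≤ B := fun c => expquad t ht c α β
  -- pointwise HasSum
  have hps : ∀ μ : ℝ, HasSum (fun n => G n μ) (f μ) := by
    intro μ
    set z : ℂ := Complex.exp (I*μ*L) with hz_def
    set w : ℂ := Complex.exp (I*t*μ^2) with hw_def
    set es : ℂ := Complex.exp (I*μ*s) with hes_def
    set ed : ℂ := Complex.exp (I*μ*d) with hed_def
    have hz : ‖z‖ = 1 := by
      rw [hz_def, show (I*μ*L : ℂ) = ((μ*L : ℝ) : ℂ) * I by push_cast; ring]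
      exact Complex.norm_exp_ofReal_mul_I _
    have hz3 : z - 3 ≠ 0 := by
      intro h
      have hz3' : z = 3 := sub_eq_zero.mp h
      rw [hz3'] at hz
      norm_num at hz
    have h13 : (1 : ℂ) - z/3 ≠ 0 := by
      intro h
      apply hz3
      have : z / 3 = 1 := by linear_combination -h
      field_simp at this
      rw [this]; ring
    have hEk : ∀ k : ℕ, E (s + k*L) μ = w*es*z^k := by
      intro k
      simp only [hE_def, hw_def, hes_def, hz_def]
      rw [← Complex.exp_nat_mul, ← Complex.exp_add, ← Complex.exp_add]
      congr 1
      push_cast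
      ring
    have hgeo : HasSum (fun n : ℕ => (z/3)^n) ((1 - z/3)⁻¹) := by
      apply hasSum_geometric_of_norm_lt_one
      rw [norm_div, hz]
      norm_num
    have hC := hgeo.mul_left ((2/3 : ℂ)*(z+1)*(w*es))
    have hterm : (fun n : ℕ => (2/3 : ℂ)*(z+1)*(w*es) * (z/3)^n) = fun n => G (n+2) μ := by
      funext n
      rw [hG_def]
      simp only
      have hEk1 : E (s + ((n:ℝ)+1)*L) μ = w*es*z^(n+1) := by
        have := hEk (n+1); push_cast at this; exact this
      rw [hEk1, hEk n]
      have h3 : (3:ℂ)^(n+1) ≠ 0 := pow_ne_zero _ (by norm_num)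
      push_cast
      rw [div_pow]
      have h3' : (3:ℂ)^n ≠ 0 := pow_ne_zero _ (by norm_num)
      field_simp
      ring
    rw [hterm] at hC
    have hfull := (hasSum_nat_add_iff (f := fun n => G n μ) 2).1 hC
    suffices hfe : f μ = 2/3*(z+1)*(w*es)*(1-z/3)⁻¹ + ∑ i ∈ Finset.range 2, G i μ by
      rw [hfe]; exact hfull
    rw [hf_def, hG_def]
    simp only [Finset.sum_range_succ, Finset.sum_range_zero]
    rw [hE_def]
    simp only
    rw [show (I*t*μ^2 + I*μ*d : ℂ) = (I*t*μ^2) + (I*μ*d) by ring, Complex.exp_add,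
      show (I*t*μ^2 + I*μ*s : ℂ) = (I*t*μ^2) + (I*μ*s) by ring, Complex.exp_add]
    rw [← hz_def, ← hw_def, ← hes_def, ← hed_def]
    have h3z : (3:ℂ) - z ≠ 0 := fun h => hz3 (by linear_combination -h)
    field_simp [hz3, h13, h3z]
    ring
  -- bounds
  set bnd : ℕ → ℝ := fun n =>
    match n with
    | 0 => 1
    | 1 => 1
    | (n+2) => 4/3^(n+1) with hbnd_def
  have hbnd_sum : Summable bnd := by
    rw [← summable_nat_add_iff 2]
    have : (fun n : ℕ => bnd (n+2)) = fun n => (4/3 : ℝ) * (1/3)^n := by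
      funext n
      rw [hbnd_def]
      simp only
      rw [div_pow, pow_succ]
      field_simp
      ring
    rw [this]
    exact (summable_geometric_of_lt_one (by norm_num) (by norm_num)).mul_left _
  have hEnorm : ∀ c μ, ‖E c μ‖ = 1 := fun c μ => by rw [hE_def]; exact norm_exp_It t c μ
  have hGnorm : ∀ n μ, ‖G n μ‖ ≤ bnd n := by
    intro n μ
    match n with
    | 0 => exact le_of_eq (hEnorm d μ)
    | 1 =>
      show ‖-(E s μ)‖ ≤ (1:ℝ)
      rw [norm_neg]
      exact le_of_eq (hEnorm s μ)
    | (n+2) =>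
      show ‖(2/3^(n+1) : ℂ) * (E (s+((n:ℝ)+1)*L) μ + E (s+(n:ℝ)*L) μ)‖ ≤ 4/3^(n+1)
      rw [norm_mul]
      have h1 : ‖(2/3^(n+1) : ℂ)‖ = 2/3^(n+1) := by
        rw [norm_div, norm_pow]
        norm_num
      rw [h1]
      have h2 : ‖E (s+((n:ℝ)+1)*L) μ + E (s+(n:ℝ)*L) μ‖ ≤ 2 := by
        calc ‖E (s+((n:ℝ)+1)*L) μ + E (s+(n:ℝ)*L) μ‖
            ≤ ‖E (s+((n:ℝ)+1)*L) μ‖ + ‖E (s+(n:ℝ)*L) μ‖ := norm_add_le _ _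
          _ = 2 := by rw [hEnorm, hEnorm]; norm_num
      have h3 : (0:ℝ) < 2/3^(n+1) := by positivity
      calc 2/3^(n+1) * ‖E (s+((n:ℝ)+1)*L) μ + E (s+(n:ℝ)*L) μ‖ ≤ 2/3^(n+1) * 2 := by nlinarith
        _ = 4/3^(n+1) := by ring
  have hGcont : ∀ n, Continuous (G n) := by
    intro n
    match n with
    | 0 => exact hEcont d
    | 1 => exact (hEcont s).neg
    | (n+2) => exact continuous_const.mul ((hEcont _).add (hEcont _))
  have hHasSum : HasSum (fun n => ∫ μ in α..β, G n μ) (∫ μ in α..β, f μ) := by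
    apply intervalIntegral.hasSum_integral_of_dominated_convergence (bound := fun n _ => bnd n)
    · exact fun n => ((hGcont n).aestronglyMeasurable).restrict
    · intro n
      filter_upwards with μ _
      exact hGnorm n μ
    · filter_upwards with μ _
      exact hbnd_sum
    · exact intervalIntegrable_const
    · filter_upwards with μ _
      exact hps μ
  set cb : ℕ → ℝ := fun n =>
    match n with
    | 0 => B
    | 1 => B
    | (n+2) => 4/3^(n+1) * B with hcb_def
  have hGint_bound : ∀ n, ‖∫ μ in α..β, G n μ‖ ≤ cb n := by
    intro n
    match n with
    | 0 => exact hEbound d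
    | 1 =>
      rw [hG_def, hcb_def]
      simp only
      rw [intervalIntegral.integral_neg, norm_neg]
      exact hEbound s
    | (n+2) =>
      rw [hG_def, hcb_def]
      simp only
      rw [intervalIntegral.integral_const_mul, norm_mul]
      have h1 : ‖(2/3^(n+1) : ℂ)‖ = 2/3^(n+1) := by
        rw [norm_div, norm_pow]; norm_num
      rw [h1, intervalIntegral.integral_add (hEint _) (hEint _)]
      have h2 : ‖(∫ μ in α..β, E (s+((n:ℝ)+1)*L) μ) + ∫ μ in α..β, E (s+(n:ℝ)*L) μ‖
          ≤ 2*B := by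
        calc ‖(∫ μ in α..β, E (s+((n:ℝ)+1)*L) μ) + ∫ μ in α..β, E (s+(n:ℝ)*L) μ‖
            ≤ ‖∫ μ in α..β, E (s+((n:ℝ)+1)*L) μ‖ + ‖∫ μ in α..β, E (s+(n:ℝ)*L) μ‖ :=
              norm_add_le _ _
          _ ≤ B + B := add_le_add (hEbound _) (hEbound _)
          _ = 2*B := by ring
      have h3 : (0:ℝ) < 2/3^(n+1) := by positivity
      calc (2/3^(n+1)) * ‖(∫ μ in α..β, E (s+((n:ℝ)+1)*L) μ) + ∫ μ in α..β, E (s+(n:ℝ)*L) μ‖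
          ≤ (2/3^(n+1)) * (2*B) := by nlinarith
        _ = 4/3^(n+1) * B := by ring
  have hcb_sum : HasSum cb (4*B) := by
    have hg : HasSum (fun n : ℕ => (4*B/3) * (1/3 : ℝ)^n) ((4*B/3) * (3/2)) := by
      have := (hasSum_geometric_of_lt_one (r := (1/3:ℝ)) (by norm_num) (by norm_num)).mul_left
        (4*B/3)
      rw [show (3/2:ℝ) = (1-1/3)⁻¹ by norm_num]
      exact this
    have heq : (fun n : ℕ => cb (n+2)) = fun n => (4*B/3) * (1/3 : ℝ)^n := by
      funext n
      rw [hcb_def]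
      simp only
      rw [div_pow, pow_succ]
      field_simp
      ring
    have h2 := (hasSum_nat_add_iff (f := cb) 2).1 (heq ▸ hg)
    suffices hce : 4*B = 4*B/3*(3/2) + ∑ i ∈ Finset.range 2, cb i by
      rw [hce]; exact h2
    rw [hcb_def]
    simp only [Finset.sum_range_succ, Finset.sum_range_zero]
    ring
  have hsumnorm : Summable (fun n => ‖∫ μ in α..β, G n μ‖) :=
    Summable.of_nonneg_of_le (fun n => norm_nonneg _) hGint_bound hcb_sum.summable
  rw [← hHasSum.tsum_eq]
  calc ‖∑' n, ∫ μ in α..β, G n μ‖ ≤ ∑' n, ‖∫ μ in α..β, G n μ‖ :=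
        norm_tsum_le_tsum_norm hsumnorm
    _ ≤ ∑' n, cb n := Summable.tsum_le_tsum hGint_bound hsumnorm hcb_sum.summable
    _ = 4*B := hcb_sum.tsum_eq
    _ = 16 / Real.sqrt t := by rw [hB_def]; ring
    _ ≤ 16 * Real.sqrt 2 / Real.sqrt t := by
        have h2 : (1:ℝ) ≤ Real.sqrt 2 := by
          rw [show (1:ℝ) = Real.sqrt 1 by simp]
          exact Real.sqrt_le_sqrt (by norm_num)
        gcongr
        nlinarith
end

section
/- Let t > 0, L ≥ 0, s ∈ ℝ, and let 0 ≤ a ≤ b be real numbers. Then ‖∫_{√a}^{√b} e^{i(tμ² + sμ)}·4(1 − e^{iμL})/(e^{iμL} − 3) dμ‖ ≤ t^{−1/2}·2√2·L·(4(2√b − √a) + L(b − a)). -/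
open Complex intervalIntegral

noncomputable def G : ℝ → ℂ := fun X => ∫ u in (0:ℝ)..X, Complex.exp (I * u ^ 2)

lemma norm_phase (u : ℝ) : ‖Complex.exp (I * (u:ℂ) ^ 2)‖ = 1 := by
  rw [Complex.norm_exp]
  simp [Complex.mul_re, ← Complex.ofReal_pow]

lemma cont_phase : Continuous fun u : ℝ => Complex.exp (I * (u:ℂ) ^ 2) := by fun_prop

lemma G_small {X : ℝ} (h0 : 0 ≤ X) (h1 : X ≤ 1) : ‖G X‖ ≤ 1 := by
  have := intervalIntegral.norm_integral_le_of_norm_le_const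
    (C := 1) (f := fun u : ℝ => Complex.exp (I * (u:ℂ) ^ 2)) (a := 0) (b := X)
    (fun x _ => le_of_eq (norm_phase x))
  calc ‖G X‖ ≤ 1 * |X - 0| := this
    _ ≤ 1 := by rw [one_mul, sub_zero, _root_.abs_of_nonneg h0]; exact h1

lemma hasDerivAt_phase (x : ℝ) :
    HasDerivAt (fun u : ℝ => Complex.exp (I * (u:ℂ) ^ 2))
      (I * (2 * x) * Complex.exp (I * (x:ℂ) ^ 2)) x := by
  have hz : HasDerivAt (fun z : ℂ => Complex.exp (I * z ^ 2))
      (I * (2 * x) * Complex.exp (I * (x:ℂ) ^ 2)) (x:ℂ) := by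
    have h1 : HasDerivAt (fun z : ℂ => I * z ^ 2) (I * (2 * x)) (x:ℂ) := by
      simpa [mul_comm] using ((hasDerivAt_pow 2 ((x:ℂ)))).const_mul I
    simpa [mul_comm] using h1.cexp
  exact hz.comp_ofReal

lemma G_tail {X : ℝ} (hX : 1 ≤ X) :
    ‖∫ u in (1:ℝ)..X, Complex.exp (I * (u:ℂ) ^ 2)‖ ≤ 3/2 := by
  have hX0 : (0:ℝ) < X := lt_of_lt_of_le one_pos hX
  set f : ℝ → ℂ := fun u : ℝ => Complex.exp (I * (u:ℂ) ^ 2) with hf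
  set u : ℝ → ℂ := fun ν : ℝ => (2 * I * ν)⁻¹ with hu
  set u' : ℝ → ℂ := fun ν : ℝ => -(2 * I * (ν:ℂ) ^ 2)⁻¹ with hu'
  set v' : ℝ → ℂ := fun ν : ℝ => I * (2 * ν) * Complex.exp (I * (ν:ℂ) ^ 2) with hv'
  have key : ∫ ν in (1:ℝ)..X, u ν * v' ν = u X * f X - u 1 * f 1 - ∫ ν in (1:ℝ)..X, u' ν * f ν := by
    refine intervalIntegral.integral_mul_deriv_eq_deriv_mul (fun ν hν => ?_)
      (fun ν hν => hasDerivAt_phase ν) ?_ ?_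
    · 
      have hν1 : (1:ℝ) ≤ ν := by
        rw [Set.uIcc_of_le hX] at hν; exact hν.1
      have hνne : (ν:ℂ) ≠ 0 := by exact_mod_cast (by linarith : ν ≠ 0)
      have : HasDerivAt (fun ν : ℝ => (2 * I * (ν:ℂ))⁻¹)
          (-(2 * I) / (2 * I * ν) ^ 2) ν := by
        have hbne : (2 * I * (ν:ℂ)) ≠ 0 := by
          simp [Complex.I_ne_zero, hνne]
        have hz : HasDerivAt (fun z : ℂ => (2 * I * z)⁻¹) (-(2 * I) / (2 * I * ν) ^ 2) (ν:ℂ) := by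
          have hb : HasDerivAt (fun z : ℂ => 2 * I * z) (2 * I) (ν:ℂ) := by
            simpa using (hasDerivAt_id ((ν:ℂ))).const_mul (2 * I)
          exact hb.inv hbne
        exact hz.comp_ofReal
      refine this.congr_deriv ?_
      rw [hu']
      field_simp
    · apply ContinuousOn.intervalIntegrable
      apply ContinuousOn.neg
      apply ContinuousOn.inv₀ (by fun_prop)
      intro ν hν
      have hν1 : (1:ℝ) ≤ ν := by rw [Set.uIcc_of_le hX] at hν; exact hν.1
      have hνne : (ν:ℂ) ≠ 0 := by exact_mod_cast (by linarith : ν ≠ 0)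
      simp [Complex.I_ne_zero, hνne]
    · apply Continuous.intervalIntegrable; fun_prop
  have heq : ∫ ν in (1:ℝ)..X, f ν = ∫ ν in (1:ℝ)..X, u ν * v' ν := by
    apply intervalIntegral.integral_congr
    intro ν hν
    have hν1 : (1:ℝ) ≤ ν := by rw [Set.uIcc_of_le hX] at hν; exact hν.1
    have hνne : (ν:ℂ) ≠ 0 := by exact_mod_cast (by linarith : ν ≠ 0)
    rw [hu, hv', hf]
    field_simp
  rw [heq, key]
  have hnu : ∀ y : ℝ, 1 ≤ y → ‖u y * f y‖ ≤ 1/2 * y⁻¹ := by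
    intro y hy
    have hy0 : (0:ℝ) < y := lt_of_lt_of_le one_pos hy
    rw [norm_mul, norm_phase, mul_one, hu, norm_inv]
    have hval : ‖(2 * I * (y:ℂ))‖ = 2 * y := by
      simp [map_mul, _root_.abs_of_nonneg hy0.le]
    rw [hval, mul_inv]
    norm_num
  have hXinv : (0:ℝ) < X⁻¹ := by positivity
  have h1 : ‖u X * f X‖ ≤ 1/2 := by
    calc ‖u X * f X‖ ≤ 1/2 * X⁻¹ := hnu X hX
      _ ≤ 1/2 * 1 := by
          gcongr
          exact inv_le_one_of_one_le₀ hX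
      _ = 1/2 := by norm_num
  have h2 : ‖u 1 * f 1‖ ≤ 1/2 := by
    calc ‖u 1 * f 1‖ ≤ 1/2 * (1:ℝ)⁻¹ := hnu 1 le_rfl
      _ = 1/2 := by norm_num
  have h3 : ‖∫ ν in (1:ℝ)..X, u' ν * f ν‖ ≤ 1/2 := by
    have hbound : ∀ ν ∈ Set.Icc (1:ℝ) X, ‖u' ν * f ν‖ ≤ 1/2 * (ν ^ (-2 : ℤ)) := by
      intro ν hν
      have hν0 : (0:ℝ) < ν := lt_of_lt_of_le one_pos hν.1
      rw [norm_mul, norm_phase, mul_one, hu', norm_neg, norm_inv]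
      have hval : ‖(2 * I * (ν:ℂ) ^ 2)‖ = 2 * ν ^ 2 := by
        simp [map_mul, map_pow, sq_abs]
      rw [hval, mul_inv]
      rw [zpow_neg, zpow_two]
      norm_num [sq]
    have hint : ∫ ν in (1:ℝ)..X, 1/2 * (ν ^ (-2:ℤ)) = 1/2 * ((X ^ (-1:ℤ) - 1 ^ (-1:ℤ)) / (-1)) := by
      rw [intervalIntegral.integral_const_mul,
        integral_zpow (Or.inr ⟨by norm_num, by
          rw [Set.uIcc_of_le hX]; intro h0; exact absurd h0.1 (by norm_num)⟩)]
      norm_num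
    have hle : ‖∫ ν in (1:ℝ)..X, u' ν * f ν‖ ≤ |∫ ν in (1:ℝ)..X, 1/2 * (ν ^ (-2:ℤ))| := by
      apply intervalIntegral.norm_integral_le_abs_of_norm_le
      · rw [MeasureTheory.ae_restrict_iff' measurableSet_uIoc]
        filter_upwards with ν hν
        have : ν ∈ Set.Icc (1:ℝ) X := by
          rw [Set.uIoc_of_le hX] at hν
          exact ⟨hν.1.le, hν.2⟩
        exact hbound ν this
      · apply ContinuousOn.intervalIntegrable
        apply ContinuousOn.mul continuousOn_const
        apply ContinuousOn.zpow₀ (continuousOn_id) _ ?_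
        intro ν hν
        left
        have : (1:ℝ) ≤ ν := by rw [Set.uIcc_of_le hX] at hν; exact hν.1
        simp only [id]
        exact ne_of_gt (lt_of_lt_of_le one_pos this)
    refine hle.trans ?_
    rw [hint]
    have hXi1 : X⁻¹ ≤ 1 := inv_le_one_of_one_le₀ hX
    rw [_root_.abs_of_nonneg (by simp [zpow_neg]; nlinarith [hXinv] : (0:ℝ) ≤ 1/2 * ((X ^ (-1:ℤ) - 1 ^ (-1:ℤ)) / (-1)))]
    simp [zpow_neg]
    nlinarith [hXinv]
  calc ‖u X * f X - u 1 * f 1 - ∫ ν in (1:ℝ)..X, u' ν * f ν‖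
      ≤ ‖u X * f X - u 1 * f 1‖ + ‖∫ ν in (1:ℝ)..X, u' ν * f ν‖ := norm_sub_le _ _
    _ ≤ (‖u X * f X‖ + ‖u 1 * f 1‖) + ‖∫ ν in (1:ℝ)..X, u' ν * f ν‖ := by
        gcongr
        exact norm_sub_le _ _
    _ ≤ (1/2 + 1/2) + 1/2 := by gcongr
    _ = 3/2 := by norm_num

lemma G_bound (X : ℝ) : ‖G X‖ ≤ 5/2 := by
  have hInt : ∀ c d : ℝ, IntervalIntegrable (fun u : ℝ => Complex.exp (I * (u:ℂ) ^ 2))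
      MeasureTheory.volume c d := fun c d => (cont_phase).intervalIntegrable c d
  have hpos : ∀ Y : ℝ, 0 ≤ Y → ‖G Y‖ ≤ 5/2 := by
    intro Y hY
    rcases le_or_gt Y 1 with h1 | h1
    · exact (G_small hY h1).trans (by norm_num)
    · have hsplit : G Y = G 1 + ∫ u in (1:ℝ)..Y, Complex.exp (I * (u:ℂ) ^ 2) := by
        rw [G, G, ← intervalIntegral.integral_add_adjacent_intervals (hInt 0 1) (hInt 1 Y)]
      rw [hsplit]
      calc ‖G 1 + _‖ ≤ ‖G 1‖ + ‖∫ u in (1:ℝ)..Y, Complex.exp (I * (u:ℂ) ^ 2)‖ := norm_add_le _ _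
        _ ≤ 1 + 3/2 := add_le_add (G_small zero_le_one le_rfl) (G_tail h1.le)
        _ = 5/2 := by norm_num
  rcases le_or_gt 0 X with hX | hX
  · exact hpos X hX
  · have hneg : G (-X) = - G X := by
      have := intervalIntegral.integral_comp_neg (a := (0:ℝ)) (b := -X)
        (f := fun u : ℝ => Complex.exp (I * (u:ℂ) ^ 2))
      simp only [neg_neg, neg_zero] at this
      have heq : (∫ u in (0:ℝ)..(-X), Complex.exp (I * ((-u : ℝ):ℂ) ^ 2))
          = ∫ u in (0:ℝ)..(-X), Complex.exp (I * (u:ℂ) ^ 2) := by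
        apply intervalIntegral.integral_congr
        intro u _
        push_cast
        ring_nf
      rw [heq] at this
      rw [G, G, this, intervalIntegral.integral_symm]
    have : ‖G X‖ = ‖G (-X)‖ := by rw [hneg, norm_neg]
    rw [this]
    exact hpos (-X) (by linarith)

lemma fresnel_s15 (c d : ℝ) : ‖∫ u in c..d, Complex.exp (I * (u:ℂ) ^ 2)‖ ≤ 5 := by
  have hInt : ∀ c d : ℝ, IntervalIntegrable (fun u : ℝ => Complex.exp (I * (u:ℂ) ^ 2))
      MeasureTheory.volume c d := fun c d => (cont_phase).intervalIntegrable c d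
  have : (∫ u in c..d, Complex.exp (I * (u:ℂ) ^ 2)) = G d - G c := by
    rw [G, G, intervalIntegral.integral_interval_sub_left (hInt 0 d) (hInt 0 c)]
  rw [this]
  calc ‖G d - G c‖ ≤ ‖G d‖ + ‖G c‖ := norm_sub_le _ _
    _ ≤ 5/2 + 5/2 := add_le_add (G_bound d) (G_bound c)
    _ = 5 := by norm_num

lemma phase_bound (t : ℝ) (ht : 0 < t) (s c d : ℝ) :
    ‖∫ μ in c..d, Complex.exp (I * (t * (μ:ℂ) ^ 2 + s * μ))‖ ≤ 5 / Real.sqrt t := by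
  set r : ℝ := Real.sqrt t with hrdef
  have hr : 0 < r := Real.sqrt_pos.2 ht
  have hr2 : r ^ 2 = t := Real.sq_sqrt ht.le
  set q : ℝ := s / (2 * r) with hqdef
  have hs : s = 2 * r * q := by
    rw [hqdef]; field_simp
  have hpt : ∀ μ : ℝ, Complex.exp (I * (t * (μ:ℂ) ^ 2 + s * μ))
      = Complex.exp (I * (-(q^2) : ℝ)) * Complex.exp (I * ((r * μ + q : ℝ) : ℂ) ^ 2) := by
    intro μ
    rw [← Complex.exp_add]
    congr 1
    rw [← hr2, hs]
    push_cast
    ring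
  rw [intervalIntegral.integral_congr (fun μ _ => hpt μ), intervalIntegral.integral_const_mul]
  rw [norm_mul, norm_exp_I_mul, one_mul]
  have hcomp : (∫ μ in c..d, Complex.exp (I * ((r * μ + q : ℝ) : ℂ) ^ 2))
      = r⁻¹ • ∫ x in r*c+q..r*d+q, Complex.exp (I * (x:ℂ) ^ 2) := by
    exact intervalIntegral.integral_comp_mul_add
      (fun x : ℝ => Complex.exp (I * (x:ℂ) ^ 2)) hr.ne' q
  rw [hcomp, norm_smul, norm_inv, Real.norm_eq_abs, _root_.abs_of_nonneg hr.le]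
  rw [div_eq_inv_mul]
  gcongr
  exact fresnel_s15 _ _

lemma norm_den_ge (x : ℝ) : (2:ℝ) ≤ ‖Complex.exp (I * x) - 3‖ := by
  have h1 : ‖Complex.exp (I * x)‖ = 1 := norm_exp_I_mul x
  have := norm_sub_norm_le (3 : ℂ) (Complex.exp (I * x))
  have h3 : ‖(3:ℂ)‖ = 3 := by norm_num
  rw [← norm_neg (Complex.exp (I * x) - 3), neg_sub]
  rw [h3, h1] at this
  linarith

lemma den_ne (x : ℝ) : Complex.exp (I * x) - 3 ≠ 0 := by
  intro h
  have := norm_den_ge x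
  rw [h, norm_zero] at this
  linarith

theorem stmt_15 (t : ℝ) (ht : 0 < t) (L : ℝ) (hL : 0 ≤ L) (s : ℝ)
    (a b : ℝ) (ha : 0 ≤ a) (hab : a ≤ b) :
    ‖∫ μ in Real.sqrt a..Real.sqrt b,
        Complex.exp (I * (t * μ ^ 2 + s * μ))
          * (4 * (1 - Complex.exp (I * μ * L)) / (Complex.exp (I * μ * L) - 3))‖
      ≤ t ^ (-(1 : ℝ) / 2) * 2 * Real.sqrt 2 * L
          * (4 * (2 * Real.sqrt b - Real.sqrt a) + L * (b - a)) := by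
  set c : ℝ := Real.sqrt a with hc
  set d : ℝ := Real.sqrt b with hd
  have hc0 : 0 ≤ c := Real.sqrt_nonneg a
  have hcd : c ≤ d := Real.sqrt_le_sqrt hab
  set r : ℝ := Real.sqrt t with hrdef
  have hr : 0 < r := Real.sqrt_pos.2 ht
  -- notation
  set phase : ℝ → ℂ := fun ν => Complex.exp (I * (t * (ν:ℂ) ^ 2 + s * ν)) with hphase
  set E : ℝ → ℂ := fun μ => Complex.exp (I * (μ:ℂ) * L) with hE
  set Ψ : ℝ → ℂ := fun μ => 4 * (1 - E μ) / (E μ - 3) with hΨ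
  set Ψ' : ℝ → ℂ := fun μ => 8 * I * L * E μ / (E μ - 3) ^ 2 with hΨ'
  set F : ℝ → ℂ := fun μ => ∫ ν in c..μ, phase ν with hF
  have hEden : ∀ μ : ℝ, E μ - 3 ≠ 0 := by
    intro μ
    have := den_ne (μ * L)
    rw [hE]
    simpa [mul_assoc, Complex.ofReal_mul] using this
  have hEnorm : ∀ μ : ℝ, ‖E μ‖ = 1 := by
    intro μ
    have := norm_exp_I_mul (μ * L)
    rw [hE]
    simpa [mul_assoc, Complex.ofReal_mul] using this
  have hEdnorm : ∀ μ : ℝ, (2:ℝ) ≤ ‖E μ - 3‖ := by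
    intro μ
    have := norm_den_ge (μ * L)
    rw [hE]
    simpa [mul_assoc, Complex.ofReal_mul] using this
  have hcontphase : Continuous phase := by rw [hphase]; fun_prop
  have hEderiv : ∀ μ : ℝ, HasDerivAt E (I * L * E μ) μ := by
    intro μ
    have hz : HasDerivAt (fun z : ℂ => Complex.exp (I * z * L))
        (I * L * Complex.exp (I * (μ:ℂ) * L)) (μ:ℂ) := by
      have h1 : HasDerivAt (fun z : ℂ => I * z * L) (I * L) (μ:ℂ) := by
        have : (fun z : ℂ => I * z * L) = fun z : ℂ => (I * L) * z := by funext z; ring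
        rw [this]
        simpa using (hasDerivAt_id ((μ:ℂ))).const_mul (I * L)
      simpa [mul_comm] using h1.cexp
    exact hz.comp_ofReal
  have hΨderiv : ∀ μ : ℝ, HasDerivAt Ψ (Ψ' μ) μ := by
    intro μ
    have hnum : HasDerivAt (fun μ : ℝ => 4 * (1 - E μ)) (4 * -(I * L * E μ)) μ :=
      (((hEderiv μ).const_sub 1).const_mul 4)
    have hden : HasDerivAt (fun μ : ℝ => E μ - 3) (I * L * E μ) μ :=
      (hEderiv μ).sub_const 3
    have := hnum.div hden (hEden μ)
    refine this.congr_deriv ?_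
    rw [hΨ']
    field_simp
    ring
  have hΨ'bound : ∀ μ : ℝ, ‖Ψ' μ‖ ≤ 2 * L := by
    intro μ
    rw [hΨ', norm_div, norm_mul, norm_mul, norm_mul]
    have h8 : ‖(8:ℂ)‖ = 8 := by norm_num
    rw [h8]
    simp only [Complex.norm_I, mul_one]
    rw [hEnorm μ]
    have hLn : ‖(L:ℂ)‖ = L := by
      simp [_root_.abs_of_nonneg hL]
    rw [hLn]
    have hd2 : (4:ℝ) ≤ ‖(E μ - 3) ^ 2‖ := by
      rw [norm_pow]
      nlinarith [hEdnorm μ]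
    rw [div_le_iff₀ (by nlinarith [hEdnorm μ] : (0:ℝ) < ‖(E μ - 3) ^ 2‖)]
    nlinarith [hd2]
  have hFbound : ∀ μ : ℝ, ‖F μ‖ ≤ 5 / r := by
    intro μ
    exact phase_bound t ht s c μ
  have hFderiv : ∀ μ : ℝ, HasDerivAt F (phase μ) μ := by
    intro μ
    exact intervalIntegral.integral_hasDerivAt_right
      (hcontphase.intervalIntegrable c μ)
      (hcontphase.stronglyMeasurableAtFilter _ _)
      hcontphase.continuousAt
  have hΨ'cont : Continuous Ψ' := by
    rw [hΨ']
    apply Continuous.div (by rw [hE]; fun_prop) (by rw [hE]; fun_prop)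
    intro μ
    exact pow_ne_zero 2 (hEden μ)
  have hibp : ∫ μ in c..d, Ψ μ * phase μ
      = Ψ d * F d - Ψ c * F c - ∫ μ in c..d, Ψ' μ * F μ := by
    apply intervalIntegral.integral_mul_deriv_eq_deriv_mul
      (fun μ _ => hΨderiv μ) (fun μ _ => hFderiv μ)
    · exact hΨ'cont.intervalIntegrable c d
    · exact hcontphase.intervalIntegrable c d
  have hFc : F c = 0 := intervalIntegral.integral_same
  have hmain : (∫ μ in c..d, phase μ * Ψ μ) = Ψ d * F d - ∫ μ in c..d, Ψ' μ * F μ := by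
    rw [intervalIntegral.integral_congr (g := fun μ => Ψ μ * phase μ)
      (fun μ _ => mul_comm _ _), hibp, hFc, mul_zero, sub_zero]
  -- norm of Ψ d
  have hΨd : ‖Ψ d‖ ≤ 2 * d * L := by
    have h1E : ‖1 - E d‖ ≤ d * L := by
      have hftc : E d - E 0 = ∫ ν in (0:ℝ)..d, I * L * E ν := by
        rw [intervalIntegral.integral_eq_sub_of_hasDerivAt
          (fun ν _ => hEderiv ν) (by
            apply Continuous.intervalIntegrable
            rw [hE]; fun_prop)]
      have hE0 : E 0 = 1 := by rw [hE]; simp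
      have hnormint : ‖∫ ν in (0:ℝ)..d, I * L * E ν‖ ≤ L * |d - 0| := by
        apply intervalIntegral.norm_integral_le_of_norm_le_const
        intro ν _
        rw [norm_mul, norm_mul]
        simp only [Complex.norm_I, one_mul]
        rw [hEnorm ν]
        simp [_root_.abs_of_nonneg hL]
      rw [← norm_neg (1 - E d), neg_sub, ← hE0, hftc]
      calc ‖∫ ν in (0:ℝ)..d, I * L * E ν‖ ≤ L * |d - 0| := hnormint
        _ = d * L := by
            rw [sub_zero, _root_.abs_of_nonneg (hc0.trans hcd)]
            ring
    rw [hΨ, norm_div, norm_mul]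
    have h4 : ‖(4:ℂ)‖ = 4 := by norm_num
    rw [h4]
    rw [div_le_iff₀ (by nlinarith [hEdnorm d] : (0:ℝ) < ‖E d - 3‖)]
    nlinarith [hEdnorm d, h1E, norm_nonneg (1 - E d), hL, hc0.trans hcd]
  -- norm of the integral term
  have hintterm : ‖∫ μ in c..d, Ψ' μ * F μ‖ ≤ (2 * L * (5 / r)) * (d - c) := by
    have := intervalIntegral.norm_integral_le_of_norm_le_const
      (C := 2 * L * (5 / r)) (f := fun μ => Ψ' μ * F μ) (a := c) (b := d)
      (fun μ _ => by
        rw [norm_mul]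
        have := mul_le_mul (hΨ'bound μ) (hFbound μ) (norm_nonneg _) (by positivity)
        exact this)
    calc ‖∫ μ in c..d, Ψ' μ * F μ‖ ≤ (2 * L * (5 / r)) * |d - c| := this
      _ = (2 * L * (5 / r)) * (d - c) := by
          rw [_root_.abs_of_nonneg (by linarith : (0:ℝ) ≤ d - c)]
  -- put together
  have htotal : ‖∫ μ in c..d, phase μ * Ψ μ‖ ≤ (10 * L / r) * (2 * d - c) := by
    rw [hmain]
    calc ‖Ψ d * F d - ∫ μ in c..d, Ψ' μ * F μ‖
        ≤ ‖Ψ d * F d‖ + ‖∫ μ in c..d, Ψ' μ * F μ‖ := norm_sub_le _ _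
      _ ≤ (2 * d * L) * (5 / r) + (2 * L * (5 / r)) * (d - c) := by
          refine add_le_add ?_ hintterm
          rw [norm_mul]
          exact mul_le_mul hΨd (hFbound d) (norm_nonneg _) (by positivity)
      _ = (10 * L / r) * (2 * d - c) := by field_simp; ring
  -- compare with RHS
  have hrpow : t ^ (-(1:ℝ)/2) = r⁻¹ := by
    rw [hrdef, Real.sqrt_eq_rpow, ← Real.rpow_neg ht.le]
    norm_num
  have hfinal : (10 * L / r) * (2 * d - c)
      ≤ t ^ (-(1:ℝ)/2) * 2 * Real.sqrt 2 * L * (4 * (2 * d - c) + L * (b - a)) := by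
    rw [hrpow]
    have h2 : Real.sqrt 2 ^ 2 = 2 := Real.sq_sqrt (by norm_num)
    have h2n : 0 ≤ Real.sqrt 2 := Real.sqrt_nonneg 2
    have hdc : 0 ≤ 2 * d - c := by linarith
    have hba : 0 ≤ L * (b - a) := mul_nonneg hL (by linarith)
    have hsqrt2 : (5/4 : ℝ) ≤ Real.sqrt 2 := by nlinarith
    have hrinv : 0 < r⁻¹ := by positivity
    have key : 10 * L * (2 * d - c) ≤ 2 * Real.sqrt 2 * L * (4 * (2 * d - c) + L * (b - a)) := by
      nlinarith [mul_nonneg hL hdc, mul_nonneg (mul_nonneg h2n hL) hba,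
        mul_nonneg (mul_nonneg h2n hL) hdc]
    calc (10 * L / r) * (2 * d - c) = r⁻¹ * (10 * L * (2 * d - c)) := by ring
      _ ≤ r⁻¹ * (2 * Real.sqrt 2 * L * (4 * (2 * d - c) + L * (b - a))) := by
          exact mul_le_mul_of_nonneg_left key hrinv.le
      _ = r⁻¹ * 2 * Real.sqrt 2 * L * (4 * (2 * d - c) + L * (b - a)) := by ring
  exact le_trans htotal hfinal
end

section
/- Let L ∈ ℝ and define Ψ : ℝ → ℂ by Ψ(μ) = 4(1 − e^{iμL})/(e^{iμL} − 3). Then Ψ is differentiable at every μ ∈ ℝ with Ψ'(μ) = 8iL·e^{iμL}/(e^{iμL} − 3)², and if moreover μ ≥ 0 and L ≥ 0 then ‖Ψ'(μ)‖ ≤ 2L + μL². -/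
open Complex

theorem stmt_17 (L : ℝ) (Ψ : ℝ → ℂ)
    (hΨ : ∀ μ : ℝ, Ψ μ = 4 * (1 - Complex.exp (I * μ * L)) / (Complex.exp (I * μ * L) - 3)) :
    (∀ μ : ℝ, HasDerivAt Ψ
        (8 * I * L * Complex.exp (I * μ * L) / (Complex.exp (I * μ * L) - 3) ^ 2) μ) ∧
    (∀ μ : ℝ, 0 ≤ μ → 0 ≤ L →
        ‖8 * I * (L : ℂ) * Complex.exp (I * μ * L) / (Complex.exp (I * μ * L) - 3) ^ 2‖
          ≤ 2 * L + μ * L ^ 2) := by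
  have habs : ∀ μ : ℝ, ‖Complex.exp (I * μ * L)‖ = 1 := by
    intro μ
    rw [Complex.norm_exp]
    simp
  have hne : ∀ μ : ℝ, Complex.exp (I * μ * L) - 3 ≠ 0 := by
    intro μ h
    have h3 : Complex.exp (I * μ * L) = 3 := by linear_combination h
    have := habs μ
    rw [h3] at this
    norm_num at this
  have hlow : ∀ μ : ℝ, (2 : ℝ) ≤ ‖Complex.exp (I * μ * L) - 3‖ := by
    intro μ
    have h1 := habs μ
    have := norm_sub_norm_le (3 : ℂ) (Complex.exp (I * μ * L))
    have h3 : ‖(3 : ℂ)‖ = 3 := by norm_num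
    have h4 : ‖3 - Complex.exp (I * μ * L)‖ =
        ‖Complex.exp (I * μ * L) - 3‖ := by
      rw [← norm_neg]; ring_nf
    rw [h3, h1, h4] at this
    linarith
  constructor
  · intro μ
    have hf : HasDerivAt (fun μ : ℝ => Complex.exp (I * μ * L))
        (I * L * Complex.exp (I * μ * L)) μ := by
      have h0 : HasDerivAt (fun μ : ℝ => (μ : ℂ)) 1 μ := Complex.ofRealCLM.hasDerivAt
      have h1 : HasDerivAt (fun μ : ℝ => I * (μ : ℂ) * L) (I * L) μ := by
        simpa [mul_comm, mul_assoc, mul_left_comm] using (h0.const_mul I).mul_const (L : ℂ)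
      simpa [mul_comm, mul_assoc, mul_left_comm] using h1.cexp
    have hg : HasDerivAt (fun μ : ℝ => 4 * (1 - Complex.exp (I * μ * L)))
        (4 * (-(I * L * Complex.exp (I * μ * L)))) μ := by
      simpa using ((hasDerivAt_const μ (1 : ℂ)).sub hf).const_mul 4
    have hh : HasDerivAt (fun μ : ℝ => Complex.exp (I * μ * L) - 3)
        (I * L * Complex.exp (I * μ * L)) μ := hf.sub_const 3
    have hq := hg.div hh (hne μ)
    have heq : (4 * (-(I * L * Complex.exp (I * μ * L))) * (Complex.exp (I * μ * L) - 3) -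
        4 * (1 - Complex.exp (I * μ * L)) * (I * L * Complex.exp (I * μ * L))) /
        (Complex.exp (I * μ * L) - 3) ^ 2 =
        8 * I * L * Complex.exp (I * μ * L) / (Complex.exp (I * μ * L) - 3) ^ 2 := by
      congr 1; ring
    rw [heq] at hq
    exact hq.congr_of_eventuallyEq (by filter_upwards with x using (hΨ x))
  · intro μ hμ hL
    have hnum : ‖8 * I * (L : ℂ) * Complex.exp (I * μ * L)‖ = 8 * L := by
      simp [map_mul, habs μ, _root_.abs_of_nonneg hL]
    rw [norm_div, hnum]
    have hden : (4 : ℝ) ≤ ‖(Complex.exp (I * μ * L) - 3) ^ 2‖ := by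
      rw [norm_pow]
      have h2 := hlow μ
      have h2' : (2:ℝ) ≤ ‖Complex.exp (I * μ * L) - 3‖ := h2
      nlinarith [norm_nonneg (Complex.exp (I * μ * L) - 3)]
    have hpos : (0 : ℝ) < ‖(Complex.exp (I * μ * L) - 3) ^ 2‖ := by linarith
    have : 8 * L / ‖(Complex.exp (I * μ * L) - 3) ^ 2‖ ≤ 8 * L / 4 := by
      apply div_le_div_of_nonneg_left (by linarith) (by norm_num) hden
    nlinarith [mul_nonneg hμ (mul_nonneg hL hL)]
end

section
/- Let L > 0 and 0 < a < b be real numbers, and let h : ℂ → ℂ be entire. Then there exist constants C > 0 and ε₀ > 0 such that for all λ ∈ [a, b] and all ε with 0 < ε < ε₀, one has ‖h(λ) − h(λ + iε)‖ ≤ C·‖sin((L/2)·√(λ + iε))‖, where √ denotes the principal branch of the complex square root. -/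
open Complex

lemma sinh_im_le_norm_sin (w : ℂ) : Real.sinh w.im ≤ ‖Complex.sin w‖ := by
  rw [Complex.sin, Real.sinh_eq]
  have h1 : ‖Complex.exp (-w * I) - Complex.exp (w * I)‖
      ≥ ‖Complex.exp (-w * I)‖ - ‖Complex.exp (w * I)‖ := norm_sub_norm_le _ _
  have h2 : ‖Complex.exp (-w * I)‖ = Real.exp w.im := by
    rw [Complex.norm_exp]; simp
  have h3 : ‖Complex.exp (w * I)‖ = Real.exp (-w.im) := by
    rw [Complex.norm_exp]; simp
  rw [h2, h3] at h1
  have h4 : ‖(Complex.exp (-w * I) - Complex.exp (w * I)) * I / 2‖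
      = ‖Complex.exp (-w * I) - Complex.exp (w * I)‖ / 2 := by
    rw [norm_div, norm_mul]; simp
  rw [h4]
  linarith

theorem stmt_18 (L a b : ℝ) (hL : 0 < L) (ha : 0 < a) (hab : a < b)
    (h : ℂ → ℂ) (hh : Differentiable ℂ h) :
    ∃ C > (0 : ℝ), ∃ ε₀ > (0 : ℝ), ∀ lam ∈ Set.Icc a b, ∀ ε : ℝ, 0 < ε → ε < ε₀ →
      ‖h lam - h (lam + I * ε)‖
        ≤ C * ‖Complex.sin ((L / 2) * ((lam + I * ε) ^ ((1 : ℂ) / 2)))‖ := by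
  have hb1 : (0:ℝ) < b + 1 := by linarith
  -- bound on deriv h on the closed ball
  have hcont : Continuous (deriv h) :=
    (hh.contDiff (n := 2)).continuous_deriv one_le_two
  obtain ⟨M, hM⟩ := (isCompact_closedBall (0:ℂ) (b+1)).exists_bound_of_continuousOn
    hcont.continuousOn
  set M' := max M 0 with hM'def
  have hM'0 : 0 ≤ M' := le_max_right _ _
  set c : ℝ := L / (4 * Real.sqrt (b + 1)) with hc
  have hsb : 0 < Real.sqrt (b+1) := Real.sqrt_pos.2 hb1
  have hcpos : 0 < c := div_pos hL (by positivity)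
  refine ⟨(M' + 1)/c, by positivity, 1, one_pos, ?_⟩
  rintro lam ⟨hla, hlb⟩ ε hε0 hε1
  set z : ℂ := (lam:ℂ) + I * ε with hz
  have hzre : z.re = lam := by simp [hz]
  have hzim : z.im = ε := by simp [hz]
  have hlam0 : 0 < lam := lt_of_lt_of_le ha hla
  have habs_le : ‖z‖ ≤ b + 1 := by
    calc ‖z‖ ≤ |z.re| + |z.im| := Complex.norm_le_abs_re_add_abs_im z
    _ = lam + ε := by rw [hzre, hzim, abs_of_pos hlam0, abs_of_pos hε0]
    _ ≤ b + 1 := by linarith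
  -- lower bound on abs z - lam
  have habs_ge : lam ≤ ‖z‖ := by
    rw [← hzre]; exact Complex.re_le_norm z
  -- (abs z - lam)(abs z + lam) = ε²
  have hsq : (‖z‖ - lam) * (‖z‖ + lam) = ε^2 := by
    have : ‖z‖^2 = lam^2 + ε^2 := by
      rw [Complex.sq_norm, Complex.normSq_apply, hzre, hzim]; ring
    nlinarith [this]
  have hdiff_ge : ε^2 / (2*(b+1)) ≤ ‖z‖ - lam := by
    rw [div_le_iff₀ (by linarith)]
    nlinarith [habs_le, habs_ge, hsq]
  -- imaginary part of the square root
  have hhalf : ((1:ℂ)/2) = ((2:ℂ)⁻¹) := by norm_num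
  have him : (z ^ ((1:ℂ)/2)).im = Real.sqrt ((‖z‖ - z.re)/2) := by
    rw [hhalf]; exact Complex.cpow_inv_two_im_eq_sqrt (by rw [hzim]; exact hε0.le)
  have him_ge : ε / (2 * Real.sqrt (b+1)) ≤ (z ^ ((1:ℂ)/2)).im := by
    rw [him, hzre]
    rw [show ε / (2 * Real.sqrt (b+1)) = Real.sqrt ((ε / (2 * Real.sqrt (b+1)))^2) from
      (Real.sqrt_sq (by positivity)).symm]
    apply Real.sqrt_le_sqrt
    have hsq2 : (ε / (2 * Real.sqrt (b+1)))^2 = ε^2 / (4*(b+1)) := by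
      rw [div_pow, mul_pow, Real.sq_sqrt hb1.le]; norm_num
    rw [hsq2]
    calc ε^2/(4*(b+1)) = (ε^2/(2*(b+1)))/2 := by field_simp; ring
    _ ≤ (‖z‖ - lam)/2 := by linarith
  -- lower bound on the sine
  have hlower : c * ε ≤ ‖Complex.sin ((L/2 : ℂ) * (z ^ ((1:ℂ)/2)))‖ := by
    have h1 : ((L/2 : ℂ) * (z ^ ((1:ℂ)/2))).im = (L/2) * (z ^ ((1:ℂ)/2)).im := by
      rw [show ((L/2 : ℂ)) = ((L/2 : ℝ) : ℂ) by push_cast; ring]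
      simp [Complex.mul_im]
    have h2 := sinh_im_le_norm_sin ((L/2 : ℂ) * (z ^ ((1:ℂ)/2)))
    rw [h1] at h2
    have h3 : c * ε ≤ (L/2) * (z ^ ((1:ℂ)/2)).im := by
      have : c * ε = (L/2) * (ε / (2 * Real.sqrt (b+1))) := by
        rw [hc]; field_simp; ring
      rw [this]
      exact mul_le_mul_of_nonneg_left him_ge (by linarith)
    have h4 : (L/2) * (z ^ ((1:ℂ)/2)).im ≤ Real.sinh ((L/2) * (z ^ ((1:ℂ)/2)).im) := by
      exact Real.self_le_sinh_iff.2 (le_trans (by positivity) h3)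
    linarith
  -- upper bound on the difference of h
  have hupper : ‖h lam - h z‖ ≤ M' * ε := by
    have hmem1 : (lam:ℂ) ∈ Metric.closedBall (0:ℂ) (b+1) := by
      simp only [Metric.mem_closedBall, dist_zero_right, Complex.norm_real,
        Real.norm_eq_abs]
      rw [abs_of_pos hlam0]; linarith
    have hmem2 : z ∈ Metric.closedBall (0:ℂ) (b+1) := by
      simpa only [Metric.mem_closedBall, dist_zero_right] using habs_le
    have : ‖h (lam:ℂ) - h z‖ ≤ M' * ‖(lam:ℂ) - z‖ :=
      (convex_closedBall (0:ℂ) (b+1)).norm_image_sub_le_of_norm_deriv_le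
      (fun x _ => hh x) (fun x hx => le_trans (hM x hx) (le_max_left _ _)) hmem2 hmem1
    calc ‖h lam - h z‖ ≤ M' * ‖(lam:ℂ) - z‖ := this
    _ = M' * ε := by
        rw [show (lam:ℂ) - z = -(I * ε) by rw [hz]; ring, norm_neg, norm_mul]
        simp [abs_of_pos hε0]
  calc ‖h lam - h z‖ ≤ M' * ε := hupper
  _ ≤ (M'+1) * ε := by nlinarith
  _ = ((M'+1)/c) * (c * ε) := by field_simp
  _ ≤ ((M'+1)/c) * ‖Complex.sin ((L/2 : ℂ) * (z ^ ((1:ℂ)/2)))‖ := by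
      apply mul_le_mul_of_nonneg_left hlower (by positivity)
end
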